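/- arXiv:1202.3052 — 15 statements merged into one kernel-verified Lean document; each statement's English description precedes it below -/
import Mathlib

section
/- Consider the leakage game on τ bits: Δ is drawn uniformly at random from the set of vectors Fin τ → ZMod 2, and, independently of Δ, a pair (S, c) with S a finite subset of Fin τ and c ∈ {0,1} is drawn from an arbitrary probability distribution L. Then for every guessing strategy, i.e., every function g mapping a pair (S, restriction of Δ to S) to a full vector Fin τ → ZMod 2, the probability that c = 1 and g(S, Δ|_S) agrees with Δ on every coordinate outside S is exactly 2^{-τ} · E_{(S,c)←L}[c · 2^{|S|}]. -/
open scoped ENNReal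

lemma count_aux {τ : ℕ} (S : Finset (Fin τ))
    (g0 : ({x // x ∈ S} → ZMod 2) → (Fin τ → ZMod 2)) :
    (Finset.univ.filter
      (fun Δ : Fin τ → ZMod 2 => ∀ i, i ∉ S → g0 (fun j => Δ j.1) i = Δ i)).card
      = 2 ^ S.card := by
  classical
  set e : ({x // x ∈ S} → ZMod 2) → (Fin τ → ZMod 2) :=
    fun f i => if h : i ∈ S then f ⟨i, h⟩ else g0 f i with he
  have hrestrict : ∀ f : {x // x ∈ S} → ZMod 2, (fun j : {x // x ∈ S} => e f j.1) = f := by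
    intro f
    funext j
    simp [he, j.2]
  have hinj : Function.Injective e := by
    intro f f' h
    have := hrestrict f
    rw [h, hrestrict f'] at this
    exact this.symm
  have himage : (Finset.univ.filter
      (fun Δ : Fin τ → ZMod 2 => ∀ i, i ∉ S → g0 (fun j => Δ j.1) i = Δ i))
      = Finset.univ.image e := by
    ext Δ
    simp only [Finset.mem_filter, Finset.mem_univ, true_and, Finset.mem_image]
    constructor
    · intro h
      refine ⟨fun j => Δ j.1, ?_⟩
      funext i
      by_cases hi : i ∈ S
      · simp [he, hi]
      · simp [he, hi, h i hi]
    · rintro ⟨f, rfl⟩ i hi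
      rw [hrestrict f]
      simp [he, hi]
  rw [himage, Finset.card_image_of_injective _ hinj, Finset.card_univ]
  simp [Fintype.card_fun]

/-- Leakage game on `τ` bits: for every guessing strategy `g`, the probability (over a
uniform `Δ : Fin τ → ZMod 2` and an independent sample `(S, c) ← L`) that `c = 1` and
`g (S, Δ|_S)` agrees with `Δ` on every coordinate outside `S` is exactly
`2 ^ (-τ) * E[(c : ℝ≥0∞) * 2 ^ |S|]`. -/
theorem stmt_0 (τ : ℕ) (hτ : 0 < τ)
    (L : PMF (Finset (Fin τ) × Bool))
    (g : (S : Finset (Fin τ)) → ({x // x ∈ S} → ZMod 2) → (Fin τ → ZMod 2)) :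
    ∑ Δ : Fin τ → ZMod 2, ∑ sc : Finset (Fin τ) × Bool,
      (PMF.uniformOfFintype (Fin τ → ZMod 2)) Δ * L sc *
        (if sc.2 = true ∧ ∀ i, i ∉ sc.1 → g sc.1 (fun j => Δ j.1) i = Δ i then 1 else 0)
    = (2 : ℝ≥0∞) ^ (-(τ : ℤ)) *
        ∑ sc : Finset (Fin τ) × Bool,
          L sc * (if sc.2 = true then 1 else 0) * 2 ^ sc.1.card := by
  classical
  have hcard : (Fintype.card (Fin τ → ZMod 2) : ℝ≥0∞) = 2 ^ τ := by
    simp [Fintype.card_fun]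
  rw [Finset.sum_comm, Finset.mul_sum]
  refine Finset.sum_congr rfl ?_
  rintro ⟨S, c⟩ -
  simp only [PMF.uniformOfFintype_apply, hcard]
  rcases c with _ | _
  · simp
  · simp only [if_pos rfl, true_and, mul_one]
    have : ∑ Δ : Fin τ → ZMod 2,
        ((2 : ℝ≥0∞) ^ τ)⁻¹ * L (S, true) *
          (if ∀ i, i ∉ S → g S (fun j => Δ j.1) i = Δ i then 1 else 0)
        = ((2 : ℝ≥0∞) ^ τ)⁻¹ * L (S, true) *
          ((Finset.univ.filter
            (fun Δ : Fin τ → ZMod 2 => ∀ i, i ∉ S → g S (fun j => Δ j.1) i = Δ i)).card) := by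
      rw [← Finset.mul_sum]
      congr 1
      rw [Finset.sum_boole]
    rw [this, count_aux S (g S)]
    rw [ENNReal.zpow_neg, zpow_natCast]
    push_cast
    ring
end

section
/- Let A be a ψ × τ matrix over ZMod 2 and let S be a subset of the column indices Fin τ such that the columns of A with indices outside S span all of the vector space Fin ψ → ZMod 2. Then the pushforward of the uniform distribution on vectors Γ : Fin τ → ZMod 2 under the map Γ ↦ (Γ|_S, A ⬝ Γ) is the uniform distribution on the product of (assignments S → ZMod 2) and (Fin ψ → ZMod 2). In particular, A ⬝ Γ is uniformly distributed and independent of the coordinates of Γ inside S. -/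
open scoped ENNReal
open Finset

lemma fiber_card_eq_aux {α β : Type*} [Fintype α] [DecidableEq β]
    [AddCommGroup α] [AddCommGroup β] (f : α →+ β) (b : β) (hb : ∃ a, f a = b) :
    (univ.filter fun a => f a = b).card = (univ.filter fun a => f a = 0).card := by
  classical
  obtain ⟨a₀, ha₀⟩ := hb
  apply Finset.card_bij (fun a _ => a - a₀)
  · intro a ha
    simp only [mem_filter, mem_univ, true_and] at ha ⊢
    simp [map_sub, ha, ha₀]
  · intro a ha a' ha' h
    exact sub_left_inj.mp h
  · intro c hc
    simp only [mem_filter, mem_univ, true_and] at hc ⊢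
    exact ⟨c + a₀, by simp [map_add, hc, ha₀], by abel⟩

lemma fiber_card_mul {α β : Type*} [Fintype α] [Fintype β] [DecidableEq β]
    [AddCommGroup α] [AddCommGroup β] (f : α →+ β) (hf : Function.Surjective f) (b : β) :
    (univ.filter fun a => f a = b).card * Fintype.card β = Fintype.card α := by
  classical
  have hcard : (Fintype.card α : ℕ) = ∑ c : β, (univ.filter fun a => f a = c).card := by
    rw [Fintype.card, Finset.card_eq_sum_card_fiberwise (fun a _ => Finset.mem_univ (f a))]
  rw [hcard]
  have h0 : ∀ c : β, (univ.filter fun a => f a = c).card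
      = (univ.filter fun a => f a = 0).card := fun c => fiber_card_eq_aux f c (hf c)
  simp_rw [h0]
  rw [Finset.sum_const, smul_eq_mul, mul_comm, Fintype.card]

lemma map_uniform_of_fiber {α β : Type*} [Fintype α] [Fintype β] [Nonempty α] [Nonempty β]
    [DecidableEq β] (f : α → β)
    (h : ∀ b : β, ((univ.filter fun a => f a = b).card : ℕ) * Fintype.card β = Fintype.card α) :
    (PMF.uniformOfFintype α).map f = PMF.uniformOfFintype β := by
  classical
  ext b
  rw [PMF.map_apply, PMF.uniformOfFintype_apply, tsum_fintype]
  have : (∑ a : α, if b = f a then ((Fintype.card α : ℝ≥0∞))⁻¹ else 0)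
      = ((univ.filter fun a => f a = b).card : ℝ≥0∞) * ((Fintype.card α : ℝ≥0∞))⁻¹ := by
    rw [show (∑ a : α, if b = f a then ((Fintype.card α : ℝ≥0∞))⁻¹ else 0)
        = ∑ a ∈ univ.filter (fun a => b = f a), ((Fintype.card α : ℝ≥0∞))⁻¹ from
        (Finset.sum_filter _ _).symm, Finset.sum_const, nsmul_eq_mul]
    have hfe : (univ.filter fun a => b = f a) = univ.filter fun a => f a = b := by
      ext a; simp [eq_comm]
    rw [hfe]
  simp only [PMF.uniformOfFintype_apply]
  rw [this]
  have hb := h b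
  have hcβ : (Fintype.card β : ℝ≥0∞) ≠ 0 := by
    exact_mod_cast Nat.cast_ne_zero.mpr Fintype.card_ne_zero
  have hfib : ((univ.filter fun a => f a = b).card : ℝ≥0∞) ≠ 0 := by
    have : (univ.filter fun a => f a = b).card ≠ 0 := by
      intro h0
      have := hb
      rw [h0, zero_mul] at this
      exact Fintype.card_ne_zero this.symm
    exact_mod_cast this
  have hα : (Fintype.card α : ℝ≥0∞)
      = ((univ.filter fun a => f a = b).card : ℝ≥0∞) * (Fintype.card β : ℝ≥0∞) := by
    exact_mod_cast hb.symm
  rw [hα, ENNReal.mul_inv (Or.inl hfib) (Or.inl (ENNReal.natCast_ne_top _)),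
    ← mul_assoc, ENNReal.mul_inv_cancel hfib (ENNReal.natCast_ne_top _), one_mul]

/-- If the columns of `A` with indices outside `S` span `Fin ψ → ZMod 2`, then the
pushforward of the uniform distribution on `Γ : Fin τ → ZMod 2` under
`Γ ↦ (Γ|_S, A.mulVec Γ)` is uniform on `(S → ZMod 2) × (Fin ψ → ZMod 2)`. -/
theorem stmt_3 (ψ τ : ℕ) (hψ : 0 < ψ) (hτ : 0 < τ)
    (A : Matrix (Fin ψ) (Fin τ) (ZMod 2)) (S : Finset (Fin τ))
    (hspan : Submodule.span (ZMod 2) ((fun j => fun i => A i j) '' {j | j ∉ S}) = ⊤) :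
    (PMF.uniformOfFintype (Fin τ → ZMod 2)).map
        (fun Γ => ((fun j : {x // x ∈ S} => Γ j.1), A.mulVec Γ))
    = PMF.uniformOfFintype (({x // x ∈ S} → ZMod 2) × (Fin ψ → ZMod 2)) := by
  classical
  -- the bundled linear map
  set F : (Fin τ → ZMod 2) →ₗ[ZMod 2] ({x // x ∈ S} → ZMod 2) × (Fin ψ → ZMod 2) :=
    (LinearMap.funLeft (ZMod 2) (ZMod 2) (fun j : {x // x ∈ S} => j.1)).prod A.mulVecLin
    with hF
  have hFapp : ∀ Γ, F Γ = ((fun j : {x // x ∈ S} => Γ j.1), A.mulVec Γ) := by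
    intro Γ; rfl
  -- extension-by-zero map
  set E : ({j : Fin τ // j ∉ S} → ZMod 2) →ₗ[ZMod 2] (Fin τ → ZMod 2) :=
    Function.ExtendByZero.linearMap (ZMod 2) (Subtype.val) with hE
  have hEval : ∀ (c : {j : Fin τ // j ∉ S} → ZMod 2) (j : Fin τ) (h : j ∉ S),
      E c j = c ⟨j, h⟩ := by
    intro c j h
    simp only [hE, Function.ExtendByZero.linearMap_apply]
    exact Subtype.val_injective.extend_apply c 0 ⟨j, h⟩
  have hEzero : ∀ (c : {j : Fin τ // j ∉ S} → ZMod 2) (j : Fin τ) (h : j ∈ S),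
      E c j = 0 := by
    intro c j h
    simp only [hE, Function.ExtendByZero.linearMap_apply]
    rw [Function.extend_apply' _ _ _ (by rintro ⟨⟨j', hj'⟩, rfl⟩; exact hj' h)]
    rfl
  -- T surjective
  have hT : Function.Surjective (A.mulVecLin.comp E) := by
    rw [← LinearMap.range_eq_top, eq_top_iff, ← hspan, Submodule.span_le]
    rintro v ⟨j, hj, rfl⟩
    refine ⟨Pi.single ⟨j, hj⟩ 1, ?_⟩
    have : E (Pi.single ⟨j, hj⟩ 1) = Pi.single j 1 := by
      funext j'
      by_cases h : j' ∈ S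
      · rw [hEzero _ _ h, Pi.single_apply, if_neg]
        rintro rfl; exact hj h
      · rw [hEval _ _ h]
        by_cases hjj : j' = j
        · subst hjj; simp
        · rw [Pi.single_apply, if_neg, Pi.single_apply, if_neg hjj]
          simp [Subtype.ext_iff, hjj]
    simp only [LinearMap.comp_apply, this, Matrix.mulVecLin_apply, Matrix.mulVec_single]
    funext i; simp
  -- F surjective
  have hFsurj : Function.Surjective F := by
    rintro ⟨g, y⟩
    set Γ₀ : Fin τ → ZMod 2 := fun j => if h : j ∈ S then g ⟨j, h⟩ else 0 with hΓ₀
    obtain ⟨c, hc⟩ := hT (y - A.mulVec Γ₀)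
    refine ⟨Γ₀ + E c, ?_⟩
    rw [hFapp]
    refine Prod.ext ?_ ?_
    · funext j
      simp only [Pi.add_apply, hΓ₀]
      rw [hEzero c _ j.2, dif_pos j.2, add_zero]
    · simp only [Matrix.mulVec_add]
      simp only [LinearMap.comp_apply, Matrix.mulVecLin_apply] at hc
      rw [hc]
      abel
  apply map_uniform_of_fiber
  intro b
  have := fiber_card_mul F.toAddMonoidHom (by simpa using hFsurj) b
  simpa [hFapp] using this
end

section
/- Let ψ ≥ 1 and n be natural numbers with 2n ≥ 9ψ. If x_1, …, x_n are drawn independently and uniformly at random from the vector space Fin ψ → ZMod 2, then the probability that the span of {x_1, …, x_n} is not the whole space Fin ψ → ZMod 2 is at most 2^{1−ψ}. -/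
open scoped ENNReal

attribute [local instance] Classical.propDecidable

lemma aux_card_span (ψ n : ℕ) (hψ : 1 ≤ ψ) :
    (Finset.univ.filter
      (fun x : Fin n → (Fin ψ → ZMod 2) => Submodule.span (ZMod 2) (Set.range x) ≠ ⊤)).card
    ≤ 2 ^ ψ * (2 ^ (ψ - 1)) ^ n := by
  classical
  set V := Fin ψ → ZMod 2
  haveI : Finite (Module.Dual (ZMod 2) V) :=
    Finite.of_injective (fun f => (f : V → ZMod 2)) DFunLike.coe_injective
  haveI : Fintype (Module.Dual (ZMod 2) V) := Fintype.ofFinite _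
  have hfr : Module.finrank (ZMod 2) V = ψ := Module.finrank_fin_fun _
  have hsub : (Finset.univ.filter
      (fun x : Fin n → V => Submodule.span (ZMod 2) (Set.range x) ≠ ⊤)) ⊆
      (Finset.univ : Finset (Module.Dual (ZMod 2) V)).biUnion
        (fun φ => Finset.univ.filter (fun x : Fin n → V => φ ≠ 0 ∧ ∀ i, φ (x i) = 0)) := by
    intro x hx
    rw [Finset.mem_filter] at hx
    obtain ⟨φ, hφ0, hφ⟩ := Submodule.exists_dual_map_eq_bot_of_lt_top
      (lt_top_iff_ne_top.2 hx.2) inferInstance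
    refine Finset.mem_biUnion.2 ⟨φ, Finset.mem_univ _, Finset.mem_filter.2
      ⟨Finset.mem_univ _, hφ0, fun i => ?_⟩⟩
    have hmem : φ (x i) ∈ (Submodule.span (ZMod 2) (Set.range x)).map φ :=
      Submodule.mem_map_of_mem (Submodule.subset_span ⟨i, rfl⟩)
    rw [hφ] at hmem
    exact (Submodule.mem_bot (ZMod 2)).1 hmem
  refine le_trans (le_trans (Finset.card_le_card hsub) (Finset.card_biUnion_le)) ?_
  have hcardD : Fintype.card (Module.Dual (ZMod 2) V) = 2 ^ ψ := by
    rw [Module.card_eq_pow_finrank (K := ZMod 2), ZMod.card, Subspace.dual_finrank_eq, hfr]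
  calc ∑ φ : Module.Dual (ZMod 2) V,
        (Finset.univ.filter (fun x : Fin n → V => φ ≠ 0 ∧ ∀ i, φ (x i) = 0)).card
      ≤ ∑ _φ : Module.Dual (ZMod 2) V, (2 ^ (ψ - 1)) ^ n := by
        refine Finset.sum_le_sum fun φ _ => ?_
        by_cases hφ : φ = 0
        · simp [hφ]
        · have hker : LinearMap.ker φ < ⊤ :=
            lt_top_iff_ne_top.2 (fun h => hφ (LinearMap.ker_eq_top.mp h))
          have hfk : Module.finrank (ZMod 2) (LinearMap.ker φ) ≤ ψ - 1 := by
            have := Submodule.finrank_lt (K := ZMod 2) (V := V) hker.ne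
            omega
          have hcardker : Fintype.card (LinearMap.ker φ) ≤ 2 ^ (ψ - 1) := by
            rw [Module.card_eq_pow_finrank (K := ZMod 2), ZMod.card]
            exact Nat.pow_le_pow_right (by norm_num) hfk
          have : (Finset.univ.filter (fun x : Fin n → V => φ ≠ 0 ∧ ∀ i, φ (x i) = 0)).card
              = Fintype.card (Fin n → LinearMap.ker φ) := by
            rw [← Fintype.card_subtype]
            have e1 : {x : Fin n → V // φ ≠ 0 ∧ ∀ i, φ (x i) = 0}
                ≃ {x : Fin n → V // ∀ i, φ (x i) = 0} :=
              Equiv.subtypeEquivRight (fun x => by simp [hφ])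
            have e2 : {x : Fin n → V // ∀ i, φ (x i) = 0}
                ≃ (Fin n → {v : V // φ v = 0}) :=
              Equiv.subtypePiEquivPi (β := fun _ : Fin n => V) (p := fun _ v => φ v = 0)
            have e3 : (Fin n → {v : V // φ v = 0}) ≃ (Fin n → LinearMap.ker φ) :=
              Equiv.piCongrRight (fun i =>
                Equiv.subtypeEquivRight (fun v => (LinearMap.mem_ker).symm))
            exact Fintype.card_congr ((e1.trans e2).trans e3)
          rw [this, Fintype.card_fun, Fintype.card_fin]
          exact Nat.pow_le_pow_left hcardker n
    _ = 2 ^ ψ * (2 ^ (ψ - 1)) ^ n := by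
        rw [Finset.sum_const, Finset.card_univ, hcardD, smul_eq_mul]

/-- If `ψ ≥ 1`, `2n ≥ 9ψ` and `x₁, …, xₙ` are drawn independently and uniformly from
`Fin ψ → ZMod 2`, the probability that they do not span the whole space is at most
`2 ^ (1 - ψ)`. -/
theorem stmt_4 (ψ n : ℕ) (hψ : 1 ≤ ψ) (hn : 9 * ψ ≤ 2 * n) :
    ∑ x : Fin n → (Fin ψ → ZMod 2),
      (PMF.uniformOfFintype (Fin n → (Fin ψ → ZMod 2))) x *
        (if Submodule.span (ZMod 2) (Set.range x) ≠ ⊤ then 1 else 0)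
    ≤ (2 : ℝ≥0∞) ^ ((1 : ℤ) - (ψ : ℤ)) := by
  classical
  have hcard : Fintype.card (Fin n → (Fin ψ → ZMod 2)) = 2 ^ (ψ * n) := by
    simp [Fintype.card_fun, ZMod.card, ← pow_mul]
  have step1 : ∑ x : Fin n → (Fin ψ → ZMod 2),
      (PMF.uniformOfFintype (Fin n → (Fin ψ → ZMod 2))) x *
        (if Submodule.span (ZMod 2) (Set.range x) ≠ ⊤ then 1 else 0)
      = ((Finset.univ.filter
          (fun x : Fin n → (Fin ψ → ZMod 2) =>
            Submodule.span (ZMod 2) (Set.range x) ≠ ⊤)).card : ℝ≥0∞)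
        * ((2 : ℝ≥0∞) ^ (ψ * n))⁻¹ := by
    simp only [PMF.uniformOfFintype_apply, hcard]
    rw [← Finset.mul_sum, Finset.sum_boole, mul_comm]
    norm_cast
  rw [step1]
  have hb := aux_card_span ψ n hψ
  have hb' : ((Finset.univ.filter
      (fun x : Fin n → (Fin ψ → ZMod 2) =>
        Submodule.span (ZMod 2) (Set.range x) ≠ ⊤)).card : ℝ≥0∞)
      ≤ (2 : ℝ≥0∞) ^ (ψ + (ψ - 1) * n) := by
    calc ((Finset.univ.filter
        (fun x : Fin n → (Fin ψ → ZMod 2) =>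
          Submodule.span (ZMod 2) (Set.range x) ≠ ⊤)).card : ℝ≥0∞)
        ≤ ((2 ^ ψ * (2 ^ (ψ - 1)) ^ n : ℕ) : ℝ≥0∞) := by exact_mod_cast hb
      _ = (2 : ℝ≥0∞) ^ (ψ + (ψ - 1) * n) := by
          push_cast
          rw [pow_add, ← pow_mul]
  refine le_trans (mul_le_mul_left hb' _) ?_
  have h2 : (2 : ℝ≥0∞) ≠ 0 := by norm_num
  have h2' : (2 : ℝ≥0∞) ≠ ⊤ := by norm_num
  rw [← zpow_natCast (2 : ℝ≥0∞) (ψ + (ψ - 1) * n), ← zpow_natCast (2 : ℝ≥0∞) (ψ * n),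
    ← ENNReal.zpow_neg, ← ENNReal.zpow_add h2 h2']
  refine ENNReal.zpow_le_of_le (by norm_num) ?_
  have hψ' : (1 : ℤ) ≤ (ψ : ℤ) := by exact_mod_cast hψ
  have hn' : (9 : ℤ) * ψ ≤ 2 * n := by exact_mod_cast hn
  have hcast : ((ψ - 1 : ℕ) : ℤ) = (ψ : ℤ) - 1 := by
    have := Nat.cast_sub hψ (R := ℤ); simpa using this
  push_cast [hcast]
  nlinarith [hn', hψ']
end

section
/- Let T be an even natural number with T ≥ 2, let C be a finite type, and let col : Fin T → C be a coloring with color class sizes a_c = |col⁻¹(c)| for c ∈ C. If π is drawn uniformly at random from the fixed-point-free involutions of Fin T, then the expected number of indices j ∈ Fin T with j < π(j) and col(j) ≠ col(π(j)) (i.e., the expected number of mismatched pairs of the pairing π) equals (1 / (2(T−1))) · Σ_{c ∈ C} a_c · (T − a_c). -/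
open Finset Equiv

def fpfInv (T : ℕ) : Finset (Equiv.Perm (Fin T)) :=
  Finset.univ.filter (fun π : Equiv.Perm (Fin T) => (∀ i, π (π i) = i) ∧ (∀ i, π i ≠ i))

lemma fpfInv_nonempty (T : ℕ) (hT2 : 2 ≤ T) (hTe : Even T) : (fpfInv T).Nonempty := by
  haveI : NeZero T := ⟨by omega⟩
  set k : Fin T := ⟨T / 2, by omega⟩ with hk
  have hkk : k + k = 0 := by
    apply Fin.ext
    simp only [Fin.add_def, hk, Fin.val_zero]
    obtain ⟨m, hm⟩ := hTe
    have : T / 2 + T / 2 = T := by omega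
    simp [this]
  refine ⟨Equiv.addRight k, ?_⟩
  simp only [fpfInv, mem_filter, mem_univ, true_and]
  constructor
  · intro i
    show i + k + k = i
    rw [add_assoc, hkk, add_zero]
  · intro i h
    have : i + k = i + 0 := by simpa using h
    have hk0 : k = 0 := by exact add_left_cancel this
    have : (0:ℕ) < T/2 := by omega
    rw [hk] at hk0
    simp [Fin.ext_iff] at hk0
    omega

lemma conj_mem {T : ℕ} (σ : Equiv.Perm (Fin T)) (hσ : ∀ x, σ (σ x) = x)
    {π : Equiv.Perm (Fin T)} (hπ : π ∈ fpfInv T) : σ * π * σ ∈ fpfInv T := by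
  simp only [fpfInv, mem_filter, mem_univ, true_and] at hπ ⊢
  obtain ⟨h1, h2⟩ := hπ
  constructor
  · intro i
    simp only [Equiv.Perm.mul_apply]
    rw [hσ, h1, hσ]
  · intro i h
    simp only [Equiv.Perm.mul_apply] at h
    have := congrArg σ h
    rw [hσ] at this
    exact h2 (σ i) this

lemma fiber_congr {T : ℕ} (j k k' : Fin T) (hk : k ≠ j) (hk' : k' ≠ j) :
    ((fpfInv T).filter (fun π => π j = k)).card
      = ((fpfInv T).filter (fun π => π j = k')).card := by
  set σ : Equiv.Perm (Fin T) := Equiv.swap k k' with hσdef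
  have hσ : ∀ x, σ (σ x) = x := fun x => Equiv.swap_apply_self _ _ _
  have hσj : σ j = j := Equiv.swap_apply_of_ne_of_ne (Ne.symm hk) (Ne.symm hk')
  apply Finset.card_bij' (fun π _ => σ * π * σ) (fun π _ => σ * π * σ)
  · intro π hπ
    simp only [mem_filter] at hπ ⊢
    refine ⟨conj_mem σ hσ hπ.1, ?_⟩
    simp only [Equiv.Perm.mul_apply, hσj, hπ.2]
    simp only [hσdef, Equiv.swap_apply_left]
  · intro π hπ
    simp only [mem_filter] at hπ ⊢
    refine ⟨conj_mem σ hσ hπ.1, ?_⟩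
    simp only [Equiv.Perm.mul_apply, hσj, hπ.2]
    simp only [hσdef, Equiv.swap_apply_right]
  · intro π _
    ext x
    simp [Equiv.Perm.mul_apply, hσ]
  · intro π _
    ext x
    simp [Equiv.Perm.mul_apply, hσ]

lemma fiber_count {T : ℕ} (j k : Fin T) (hk : k ≠ j) :
    (T - 1) * ((fpfInv T).filter (fun π => π j = k)).card = (fpfInv T).card := by
  have h1 : (fpfInv T).card = ∑ k' : Fin T, ((fpfInv T).filter (fun π => π j = k')).card :=
    Finset.card_eq_sum_card_fiberwise (fun π _ => mem_univ (π j))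
  rw [h1, ← Finset.sum_erase_add _ _ (mem_univ j)]
  have hj0 : ((fpfInv T).filter (fun π => π j = j)).card = 0 := by
    rw [Finset.card_eq_zero]
    ext π
    simp only [mem_filter, fpfInv, mem_univ, true_and, Finset.notMem_empty, iff_false]
    rintro ⟨⟨_, h2⟩, h3⟩
    exact h2 j h3
  rw [hj0, add_zero]
  rw [Finset.sum_congr rfl (fun k' hk' => fiber_congr j k' k (Finset.ne_of_mem_erase hk') hk)]
  rw [Finset.sum_const, Finset.card_erase_of_mem (mem_univ j), Finset.card_univ, Fintype.card_fin,
    smul_eq_mul]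

section
variable {T : ℕ} {C : Type*} [Fintype C] [DecidableEq C] (col : Fin T → C)

def misP : Finset (Fin T × Fin T) :=
  Finset.univ.filter (fun p => p.1 < p.2 ∧ col p.1 ≠ col p.2)

def misQ : Finset (Fin T × Fin T) :=
  Finset.univ.filter (fun p => col p.1 ≠ col p.2)

omit [Fintype C] in
lemma count_pairs (π : Equiv.Perm (Fin T)) :
    (Finset.univ.filter (fun j : Fin T => j < π j ∧ col j ≠ col (π j))).card
      = ((misP col).filter (fun p => π p.1 = p.2)).card := by
  apply Finset.card_bij' (fun j _ => (j, π j)) (fun p _ => p.1)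
  · intro j hj
    have hj' := (Finset.mem_filter.mp hj).2
    exact Finset.mem_filter.mpr ⟨Finset.mem_filter.mpr ⟨mem_univ _, hj'⟩, rfl⟩
  · intro p hp
    obtain ⟨hp1, hp2⟩ := Finset.mem_filter.mp hp
    have hp1' := (Finset.mem_filter.mp hp1).2
    rw [← hp2] at hp1'
    exact Finset.mem_filter.mpr ⟨mem_univ _, hp1'⟩
  · intro j _; rfl
  · intro p hp
    exact Prod.ext rfl (Finset.mem_filter.mp hp).2

omit [Fintype C] in
lemma misQ_card_eq : (misQ col).card = 2 * (misP col).card := by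
  have hsplit := Finset.card_filter_add_card_filter_not
    (s := misQ col) (p := fun p => p.1 < p.2)
  have h1 : (misQ col).filter (fun p => p.1 < p.2) = misP col := by
    simp only [misQ, misP, Finset.filter_filter]
    exact Finset.filter_congr (fun p _ => by tauto)
  have h2 : ((misQ col).filter (fun p => ¬ p.1 < p.2)).card = (misP col).card := by
    apply Finset.card_bij' (fun p _ => Prod.swap p) (fun p _ => Prod.swap p)
    · intro p hp
      simp only [misQ, misP, mem_filter, mem_univ, true_and] at hp ⊢
      obtain ⟨h3, h4⟩ := hp
      have hne : p.1 ≠ p.2 := fun h => h3 (by rw [h])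
      exact ⟨lt_of_le_of_ne (not_lt.mp h4) (Ne.symm hne), Ne.symm h3⟩
    · intro p hp
      simp only [misQ, misP, mem_filter, mem_univ, true_and] at hp ⊢
      exact ⟨Ne.symm hp.2, not_lt.mpr (le_of_lt hp.1)⟩
    · intro p _; exact Prod.swap_swap p
    · intro p _; exact Prod.swap_swap p
  rw [h1, h2] at hsplit
  omega

lemma misQ_card_sum :
    ((misQ col).card : ℝ)
      = ∑ c : C, ((Finset.univ.filter (fun j : Fin T => col j = c)).card : ℝ) *
          ((T : ℝ) - ((Finset.univ.filter (fun j : Fin T => col j = c)).card : ℝ)) := by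
  have h1 : (misQ col).card
      = ∑ j : Fin T, ((misQ col).filter (fun p => p.1 = j)).card :=
    Finset.card_eq_sum_card_fiberwise (fun p _ => mem_univ p.1)
  have h2 : ∀ j : Fin T, ((misQ col).filter (fun p => p.1 = j)).card
      = (Finset.univ.filter (fun k : Fin T => col j ≠ col k)).card := by
    intro j
    refine Finset.card_bij' (fun p _ => p.2) (fun k _ => (j, k)) ?_ ?_ ?_ ?_
    · intro p hp
      obtain ⟨hp1, hp2⟩ := Finset.mem_filter.mp hp
      have := (Finset.mem_filter.mp hp1).2
      rw [hp2] at this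
      exact Finset.mem_filter.mpr ⟨mem_univ _, this⟩
    · intro k hk
      exact Finset.mem_filter.mpr
        ⟨Finset.mem_filter.mpr ⟨mem_univ _, (Finset.mem_filter.mp hk).2⟩, rfl⟩
    · intro p hp
      have h := (Finset.mem_filter.mp hp).2
      exact Prod.ext h.symm rfl
    · intro k _; rfl
  have h3 : ∀ j : Fin T,
      ((Finset.univ.filter (fun k : Fin T => col j ≠ col k)).card : ℝ)
        = (T : ℝ) - ((Finset.univ.filter (fun k : Fin T => col k = col j)).card : ℝ) := by
    intro j
    have hh := Finset.card_filter_add_card_filter_not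
      (s := (Finset.univ : Finset (Fin T))) (p := fun k => col k = col j)
    have heq : Finset.univ.filter (fun k : Fin T => ¬ col k = col j)
        = Finset.univ.filter (fun k : Fin T => col j ≠ col k) := by
      apply Finset.filter_congr; intro k _; constructor <;> exact Ne.symm
    rw [heq, Finset.card_univ, Fintype.card_fin] at hh
    have := congrArg (fun n : ℕ => (n : ℝ)) hh
    push_cast at this
    linarith
  calc ((misQ col).card : ℝ)
      = ∑ j : Fin T, (((misQ col).filter (fun p => p.1 = j)).card : ℝ) := by
        rw [h1]; push_cast; rfl
    _ = ∑ j : Fin T,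
          ((T : ℝ) - ((Finset.univ.filter (fun k : Fin T => col k = col j)).card : ℝ)) :=
        Finset.sum_congr rfl (fun j _ => by rw [h2 j]; exact h3 j)
    _ = ∑ c : C, ∑ j ∈ Finset.univ.filter (fun j : Fin T => col j = c),
          ((T : ℝ) - ((Finset.univ.filter (fun k : Fin T => col k = col j)).card : ℝ)) :=
        (Finset.sum_fiberwise _ _ _).symm
    _ = ∑ c : C, ((Finset.univ.filter (fun j : Fin T => col j = c)).card : ℝ) *
          ((T : ℝ) - ((Finset.univ.filter (fun j : Fin T => col j = c)).card : ℝ)) := by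
        refine Finset.sum_congr rfl (fun c _ => ?_)
        rw [Finset.sum_congr rfl
          (fun j hj => by rw [(Finset.mem_filter.mp hj).2]),
          Finset.sum_const, nsmul_eq_mul]

end

/-- For a coloring `col : Fin T → C` with color class sizes `a_c` and a uniformly random
fixed-point-free involution `π` of `Fin T` (`T` even, `T ≥ 2`), the expected number of
mismatched pairs (indices `j` with `j < π j` and `col j ≠ col (π j)`) equals
`(1 / (2 (T - 1))) * ∑_c a_c (T - a_c)`. -/
theorem stmt_6 (T : ℕ) (hT2 : 2 ≤ T) (hTe : Even T) (C : Type*) [Fintype C] [DecidableEq C]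
    (col : Fin T → C) :
    (∑ π ∈ Finset.univ.filter
        (fun π : Equiv.Perm (Fin T) => (∀ i, π (π i) = i) ∧ (∀ i, π i ≠ i)),
        ((Finset.univ.filter (fun j : Fin T => j < π j ∧ col j ≠ col (π j))).card : ℝ)) /
      ((Finset.univ.filter
          (fun π : Equiv.Perm (Fin T) => (∀ i, π (π i) = i) ∧ (∀ i, π i ≠ i))).card : ℝ)
    = (1 / (2 * ((T : ℝ) - 1))) *
        ∑ c : C, ((Finset.univ.filter (fun j : Fin T => col j = c)).card : ℝ) *
          ((T : ℝ) - ((Finset.univ.filter (fun j : Fin T => col j = c)).card : ℝ)) := by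
  have hF : Finset.univ.filter
      (fun π : Equiv.Perm (Fin T) => (∀ i, π (π i) = i) ∧ (∀ i, π i ≠ i)) = fpfInv T := rfl
  rw [hF]
  have hT1 : ((T : ℝ) - 1) ≠ 0 := by
    have : (2 : ℝ) ≤ (T : ℝ) := by exact_mod_cast hT2
    linarith
  have hFpos : (0 : ℝ) < ((fpfInv T).card : ℝ) := by
    exact_mod_cast Finset.card_pos.mpr (fpfInv_nonempty T hT2 hTe)
  have key : (T - 1) * ∑ π ∈ fpfInv T,
      (Finset.univ.filter (fun j : Fin T => j < π j ∧ col j ≠ col (π j))).card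
      = (misP col).card * (fpfInv T).card := by
    have e1 : ∑ π ∈ fpfInv T,
        (Finset.univ.filter (fun j : Fin T => j < π j ∧ col j ≠ col (π j))).card
        = ∑ p ∈ misP col, ((fpfInv T).filter (fun π => π p.1 = p.2)).card := by
      rw [Finset.sum_congr rfl (fun π _ => count_pairs col π)]
      simp only [Finset.card_filter]
      rw [Finset.sum_comm]
    rw [e1, Finset.mul_sum]
    rw [Finset.sum_congr rfl
      (fun p hp => fiber_count p.1 p.2 (ne_of_gt (Finset.mem_filter.mp hp).2.1))]
    rw [Finset.sum_const, smul_eq_mul]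
  have keyR := congrArg (fun n : ℕ => (n : ℝ)) key
  push_cast [Nat.cast_sub (by omega : 1 ≤ T)] at keyR
  have hsum : ∑ π ∈ fpfInv T,
      ((Finset.univ.filter (fun j : Fin T => j < π j ∧ col j ≠ col (π j))).card : ℝ)
      = ((misP col).card : ℝ) * ((fpfInv T).card : ℝ) / ((T : ℝ) - 1) := by
    field_simp
    linarith [keyR]
  rw [hsum, ← misQ_card_sum col]
  have hq : ((misQ col).card : ℝ) = 2 * ((misP col).card : ℝ) := by
    exact_mod_cast misQ_card_eq col
  rw [hq]
  field_simp
end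

section
/- Let T be an even natural number and let a_0, a_1, …, a_k be natural numbers with Σ_{i=0}^{k} a_i = T and a_0 ≥ a_i for every i. Then a_0 + Σ_{i=1}^{k} a_i² ≤ T/2 + (T/2)². -/
/-- If `T` is even, `a₀ + a₁ + ⋯ + a_k = T` and `a₀` is maximal among the `aᵢ`, then
`a₀ + ∑_{i=1}^{k} aᵢ² ≤ T/2 + (T/2)²`. -/
theorem stmt_7 (T k : ℕ) (hT : Even T) (a₀ : ℕ) (a : Fin k → ℕ)
    (hsum : a₀ + ∑ i, a i = T) (hmax : ∀ i, a i ≤ a₀) :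
    a₀ + ∑ i, (a i) ^ 2 ≤ T / 2 + (T / 2) ^ 2 := by
  obtain ⟨m, hm⟩ := hT
  have hT2 : T / 2 = m := by omega
  have hsq : ∑ i, (a i) ^ 2 ≤ a₀ * ∑ i, a i := by
    rw [Finset.mul_sum]
    exact Finset.sum_le_sum fun i _ => by
      have := hmax i; nlinarith
  set S := ∑ i, a i with hS
  have h1 : a₀ + S = m + m := by omega
  rw [hT2]
  have h2 : a₀ + a₀ * S ≤ m + m ^ 2 := by
    zify at h1 ⊢
    nlinarith [sq_nonneg ((a₀ : ℤ) - m), sq_nonneg ((a₀ : ℤ) - m - 1), mul_self_nonneg ((a₀:ℤ)-m)]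
  calc a₀ + ∑ i, (a i) ^ 2 ≤ a₀ + a₀ * S := by omega
    _ ≤ m + m ^ 2 := h2
end

section
/- Let τ ≥ 1 be a natural number and let a_0, a_1, …, a_k be natural numbers with Σ_{i=0}^{k} a_i = 2τ and a_0 ≥ a_i for every i. Then, as real numbers, (1/2)·a_0 + (1/(2(2τ−1))) · Σ_{i=1}^{k} a_i·(2τ − a_i) > (3/4)·τ. -/
/-- If `τ ≥ 1`, `a₀ + a₁ + ⋯ + a_k = 2τ` and `a₀` is maximal among the `aᵢ`, then, over
the reals, `(1/2) a₀ + (1/(2(2τ-1))) ∑_{i=1}^{k} aᵢ (2τ - aᵢ) > (3/4) τ`. -/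
theorem stmt_8 (τ k : ℕ) (hτ : 1 ≤ τ) (a₀ : ℕ) (a : Fin k → ℕ)
    (hsum : a₀ + ∑ i, a i = 2 * τ) (hmax : ∀ i, a i ≤ a₀) :
    (3 / 4 : ℝ) * τ <
      (1 / 2 : ℝ) * a₀ +
        (1 / (2 * (2 * (τ : ℝ) - 1))) * ∑ i, (a i : ℝ) * (2 * (τ : ℝ) - (a i : ℝ)) := by
  set t : ℝ := (τ : ℝ) with ht'
  set A : ℝ := (a₀ : ℝ) with hA'
  have ht : (1 : ℝ) ≤ t := by rw [ht']; exact_mod_cast hτ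
  have hS : A + ∑ i, (a i : ℝ) = 2 * t := by
    rw [ht', hA', ← Nat.cast_sum, ← Nat.cast_add, ← Nat.cast_ofNat, ← Nat.cast_mul]
    exact_mod_cast congrArg (Nat.cast : ℕ → ℝ) hsum
  have hd : (0 : ℝ) < 2 * (2 * t - 1) := by linarith
  have hbound : ∑ i, (a i : ℝ) * (2 * t - A) ≤ ∑ i, (a i : ℝ) * (2 * t - (a i : ℝ)) := by
    refine Finset.sum_le_sum fun i _ => ?_
    have h1 : (a i : ℝ) ≤ A := by rw [hA']; exact_mod_cast hmax i
    have h2 : (0 : ℝ) ≤ (a i : ℝ) := Nat.cast_nonneg _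
    nlinarith
  have hsq : (2 * t - A) ^ 2 ≤ ∑ i, (a i : ℝ) * (2 * t - (a i : ℝ)) := by
    have : ∑ i, (a i : ℝ) * (2 * t - A) = (∑ i, (a i : ℝ)) * (2 * t - A) :=
      (Finset.sum_mul ..).symm
    rw [this] at hbound
    have hs2 : ∑ i, (a i : ℝ) = 2 * t - A := by linarith
    rw [hs2] at hbound
    nlinarith [hbound]
  have hc : (0 : ℝ) < 1 / (2 * (2 * t - 1)) := by positivity
  have key : (3 / 4 : ℝ) * t - (1 / 2 : ℝ) * A < (1 / (2 * (2 * t - 1))) * (2 * t - A) ^ 2 := by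
    rw [show (1:ℝ) / (2 * (2 * t - 1)) * (2 * t - A) ^ 2 = (2 * t - A) ^ 2 / (2 * (2 * t - 1)) from one_div_mul_eq_div _ _, lt_div_iff₀ hd]
    nlinarith [sq_nonneg (2 * A - 2 * t - 1)]
  have := mul_le_mul_of_nonneg_left hsq hc.le
  linarith
end

section
/- Let B, ℓ ≥ 1 be natural numbers and consider a uniformly random assignment of Bℓ balls into ℓ buckets of exactly B balls each, i.e., a bijection drawn uniformly from the equivalences Fin (Bℓ) ≃ Fin ℓ × Fin B, where the first coordinate is the bucket. For any fixed set S of exactly B balls and any fixed bucket i ∈ Fin ℓ, the probability that every ball of S is assigned to bucket i equals 1 / (Bℓ choose B). -/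
def combineEquiv {α β : Type*} (p : α → Prop) (q : β → Prop)
    [DecidablePred p] [DecidablePred q] :
    (({a // p a} ≃ {b // q b}) × ({a // ¬ p a} ≃ {b // ¬ q b})) ≃
      {e : α ≃ β // ∀ a, p a ↔ q (e a)} where
  toFun fg := ⟨(Equiv.sumCompl p).symm.trans ((fg.1.sumCongr fg.2).trans (Equiv.sumCompl q)), by
    intro a
    by_cases h : p a <;>
      simp [h, Equiv.sumCompl_symm_apply_of_pos, Equiv.sumCompl_symm_apply_of_neg,
        (fg.1 ⟨a, _⟩).2, (fg.2 ⟨a, _⟩).2]⟩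
  invFun e := ⟨e.1.subtypeEquiv e.2, e.1.subtypeEquiv fun a => not_iff_not.mpr (e.2 a)⟩
  left_inv := by
    rintro ⟨f, g⟩
    ext a
    · simp [Equiv.sumCompl_symm_apply_of_pos (p := p) a.2]
    · simp [Equiv.sumCompl_symm_apply_of_neg (p := p) a.2]
  right_inv := by
    rintro ⟨e, he⟩
    ext a
    by_cases h : p a
    · simp [Equiv.sumCompl_symm_apply_of_pos (p := p) h]
    · simp [Equiv.sumCompl_symm_apply_of_neg (p := p) h]


/-- Throwing `B·ℓ` balls into `ℓ` buckets of exactly `B` balls each via a uniformly random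
bijection `Fin (B·ℓ) ≃ Fin ℓ × Fin B` (first coordinate the bucket): for any fixed set `S`
of exactly `B` balls and any fixed bucket `i`, the probability that every ball of `S` lands
in bucket `i` is `1 / (B·ℓ choose B)`. -/
theorem stmt_9 (B ℓ : ℕ) (hB : 1 ≤ B) (hℓ : 1 ≤ ℓ)
    (S : Finset (Fin (B * ℓ))) (hS : S.card = B) (i : Fin ℓ) :
    ((Finset.univ.filter
          (fun e : Fin (B * ℓ) ≃ Fin ℓ × Fin B => ∀ j ∈ S, (e j).1 = i)).card : ℝ) /
        (Fintype.card (Fin (B * ℓ) ≃ Fin ℓ × Fin B) : ℝ)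
    = 1 / (Nat.choose (B * ℓ) B : ℝ) := by
  classical
  have hBl : B ≤ B * ℓ := Nat.le_mul_of_pos_right B hℓ
  -- fiber cardinality
  have hfib : Fintype.card {y : Fin ℓ × Fin B // y.1 = i} = B := by
    have : {y : Fin ℓ × Fin B // y.1 = i} ≃ Fin B :=
      ⟨fun y => y.1.2, fun b => ⟨(i, b), rfl⟩, fun y => by
        rcases y with ⟨⟨a, b⟩, h⟩; cases h; rfl, fun b => rfl⟩
    simp [Fintype.card_congr this]
  have hScard : Fintype.card {a : Fin (B * ℓ) // a ∈ S} = B := by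
    simp [Fintype.card_subtype, hS]
  -- predicate equivalence
  have hpred : ∀ e : Fin (B * ℓ) ≃ Fin ℓ × Fin B,
      (∀ j ∈ S, (e j).1 = i) ↔ (∀ a, a ∈ S ↔ (e a).1 = i) := by
    intro e
    constructor
    · intro h a
      refine ⟨h a, fun hq => ?_⟩
      have himg : (S.image e).card = B := by rw [Finset.card_image_of_injective _ e.injective, hS]
      have hsub : S.image e ⊆ Finset.univ.filter (fun y : Fin ℓ × Fin B => y.1 = i) := by
        intro y hy
        rcases Finset.mem_image.mp hy with ⟨j, hj, rfl⟩
        simp [h j hj]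
      have hcard : (Finset.univ.filter (fun y : Fin ℓ × Fin B => y.1 = i)).card = B := by
        have : (Finset.univ.filter (fun y : Fin ℓ × Fin B => y.1 = i))
            = {i} ×ˢ (Finset.univ : Finset (Fin B)) := by
          ext ⟨a, b⟩; simp [eq_comm]
        rw [this]; simp
      have heq : S.image e = Finset.univ.filter (fun y : Fin ℓ × Fin B => y.1 = i) := by
        apply Finset.eq_of_subset_of_card_le hsub
        rw [himg, hcard]
      have : e a ∈ S.image e := by rw [heq]; simp [hq]
      rcases Finset.mem_image.mp this with ⟨j, hj, hje⟩
      rwa [← e.injective hje]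
    · intro h j hj
      exact (h j).mp hj
  have hfilter : (Finset.univ.filter
        (fun e : Fin (B * ℓ) ≃ Fin ℓ × Fin B => ∀ j ∈ S, (e j).1 = i)).card
      = Nat.factorial B * Nat.factorial (B * ℓ - B) := by
    rw [Finset.filter_congr (q := fun e : Fin (B * ℓ) ≃ Fin ℓ × Fin B => ∀ a, a ∈ S ↔ (e a).1 = i) (fun e _ => hpred e)]
    rw [← Fintype.card_subtype]
    rw [← Fintype.card_congr (combineEquiv (fun a : Fin (B * ℓ) => a ∈ S)
      (fun y : Fin ℓ × Fin B => y.1 = i))]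
    rw [Fintype.card_prod]
    have h1 : Fintype.card ({a : Fin (B * ℓ) // a ∈ S} ≃ {y : Fin ℓ × Fin B // y.1 = i})
        = Nat.factorial B := by
      rw [Fintype.card_equiv (Fintype.equivOfCardEq (by rw [hScard, hfib])), hScard]
    have hc1 : Fintype.card {a : Fin (B * ℓ) // ¬ a ∈ S} = B * ℓ - B := by
      rw [Fintype.card_subtype_compl, hScard, Fintype.card_fin]
    have hc2 : Fintype.card {y : Fin ℓ × Fin B // ¬ y.1 = i} = B * ℓ - B := by
      rw [Fintype.card_subtype_compl, hfib, Fintype.card_prod, Fintype.card_fin,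
        Fintype.card_fin, mul_comm]
    have h2 : Fintype.card ({a : Fin (B * ℓ) // ¬ a ∈ S} ≃ {y : Fin ℓ × Fin B // ¬ y.1 = i})
        = Nat.factorial (B * ℓ - B) := by
      rw [Fintype.card_equiv (Fintype.equivOfCardEq (by rw [hc1, hc2])), hc1]
    rw [h1, h2]
  have htot : Fintype.card (Fin (B * ℓ) ≃ Fin ℓ × Fin B) = Nat.factorial (B * ℓ) := by
    rw [Fintype.card_equiv (Fintype.equivOfCardEq (by simp [mul_comm])), Fintype.card_fin]
  rw [hfilter, htot]
  have hkey : Nat.choose (B * ℓ) B * Nat.factorial B * Nat.factorial (B * ℓ - B)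
      = Nat.factorial (B * ℓ) := Nat.choose_mul_factorial_mul_factorial hBl
  have hfpos : (0 : ℝ) < Nat.factorial (B * ℓ) := by positivity
  have hcpos : (0 : ℝ) < Nat.choose (B * ℓ) B := by
    exact_mod_cast Nat.choose_pos hBl
  rw [div_eq_div_iff hfpos.ne' hcpos.ne', one_mul]
  push_cast [← hkey]
  ring
end

section
/- Let B, ℓ ≥ 1 be natural numbers and consider a uniformly random assignment of Bℓ balls into ℓ buckets of exactly B balls each (a bijection drawn uniformly from Fin (Bℓ) ≃ Fin ℓ × Fin B, the first coordinate being the bucket). Let Γ be a fixed subset of the balls with |Γ| = γ (the 'leaky' balls). Then the probability that there exists a bucket all of whose B balls belong to Γ is at most (γ choose B) · ℓ / (Bℓ choose B). -/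
open Finset

lemma exists_perm_mem_iff {α : Type*} [DecidableEq α] [Fintype α] (s t : Finset α)
    (h : s.card = t.card) : ∃ σ : Equiv.Perm α, ∀ x, x ∈ s ↔ σ x ∈ t := by
  classical
  have h1 : Fintype.card {x // x ∈ s} = Fintype.card {x // x ∈ t} := by
    simp [Fintype.card_coe, h]
  have h2 : Fintype.card {x // x ∉ s} = Fintype.card {x // x ∉ t} := by
    simp only [Fintype.card_subtype_compl, Fintype.card_coe]
    rw [h]
  let e₁ : {x // x ∈ s} ≃ {x // x ∈ t} := Fintype.equivOfCardEq h1
  let e₂ : {x // x ∉ s} ≃ {x // x ∉ t} := Fintype.equivOfCardEq h2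
  refine ⟨(Equiv.sumCompl (· ∈ s)).symm.trans ((e₁.sumCongr e₂).trans
    (Equiv.sumCompl (· ∈ t))), fun x => ?_⟩
  by_cases hx : x ∈ s
  · simp [Equiv.sumCompl_symm_apply_of_pos hx, hx, (e₁ ⟨x, hx⟩).2]
  · simp [Equiv.sumCompl_symm_apply_of_neg hx, hx, (e₂ ⟨x, hx⟩).2]

/-- Throwing `B·ℓ` balls into `ℓ` buckets of exactly `B` balls each via a uniformly random
bijection `Fin (B·ℓ) ≃ Fin ℓ × Fin B` (first coordinate the bucket): if `Γ` is a fixed set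
of `γ` leaky balls, the probability that some bucket consists entirely of balls from `Γ`
is at most `(γ choose B) · ℓ / (B·ℓ choose B)`. -/
theorem stmt_10 (B ℓ γ : ℕ) (hB : 1 ≤ B) (hℓ : 1 ≤ ℓ)
    (Γ : Finset (Fin (B * ℓ))) (hΓ : Γ.card = γ) :
    ((Finset.univ.filter
          (fun e : Fin (B * ℓ) ≃ Fin ℓ × Fin B =>
            ∃ i : Fin ℓ, ∀ j : Fin (B * ℓ), (e j).1 = i → j ∈ Γ)).card : ℝ) /
        (Fintype.card (Fin (B * ℓ) ≃ Fin ℓ × Fin B) : ℝ)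
    ≤ (Nat.choose γ B : ℝ) * (ℓ : ℝ) / (Nat.choose (B * ℓ) B : ℝ) := by
  classical
  have hBn : B ≤ B * ℓ := Nat.le_mul_of_pos_right B hℓ
  -- a reference B-element subset
  obtain ⟨S₀, -, hS₀card⟩ := Finset.exists_subset_card_eq
    (show B ≤ (univ : Finset (Fin (B * ℓ))).card by simpa using hBn)
  -- choice of permutations mapping S₀ to any B-set
  have key : ∀ S : Finset (Fin (B * ℓ)), ∃ σ : Equiv.Perm (Fin (B * ℓ)),
      S.card = B → ∀ j, j ∈ S₀ ↔ σ j ∈ S := by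
    intro S
    by_cases h : S.card = B
    · obtain ⟨σ, hσ⟩ := exists_perm_mem_iff S₀ S (by rw [hS₀card, h])
      exact ⟨σ, fun _ => hσ⟩
    · exact ⟨1, fun h' => absurd h' h⟩
  choose σf hσf using key
  -- total number of equivalences
  have hcard_equiv : Fintype.card (Fin (B * ℓ) ≃ Fin ℓ × Fin B) = (B * ℓ).factorial := by
    rw [Fintype.card_equiv (Fintype.equivOfCardEq (by simp [mul_comm]))]
    simp
  -- per-bucket bound
  have main : ∀ i : Fin ℓ,
      (univ.filter (fun e : Fin (B * ℓ) ≃ Fin ℓ × Fin B =>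
        ∀ j : Fin (B * ℓ), (e j).1 = i → j ∈ Γ)).card * Nat.choose (B * ℓ) B
      ≤ Nat.choose γ B * (B * ℓ).factorial := by
    intro i
    set pre : (Fin (B * ℓ) ≃ Fin ℓ × Fin B) → Finset (Fin (B * ℓ)) :=
      fun e => univ.filter (fun j => (e j).1 = i) with hpre_def
    have hpre : ∀ e, (pre e).card = B := by
      intro e
      rw [show (pre e).card = (univ : Finset (Fin B)).card from ?_]
      · simp
      · apply Finset.card_bij' (fun a _ => (e a).2) (fun b _ => e.symm (i, b))
        · intro a _; exact mem_univ _
        · intro b _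
          simp [hpre_def]
        · intro a ha
          simp only [hpre_def, mem_filter, mem_univ, true_and] at ha
          rw [show ((i : Fin ℓ), (e a).2) = e a from ?_]
          · simp
          · rw [← ha]
        · intro b _; simp
    set T : Finset (Fin (B * ℓ) ≃ Fin ℓ × Fin B) :=
      univ.filter (fun f => ∀ j, (f j).1 = i ↔ j ∈ S₀) with hT_def
    -- Claim A: event card ≤ choose γ B * T.card
    have claimA : (univ.filter (fun e : Fin (B * ℓ) ≃ Fin ℓ × Fin B =>
        ∀ j : Fin (B * ℓ), (e j).1 = i → j ∈ Γ)).card ≤ Nat.choose γ B * T.card := by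
      have hinj : (univ.filter (fun e : Fin (B * ℓ) ≃ Fin ℓ × Fin B =>
          ∀ j : Fin (B * ℓ), (e j).1 = i → j ∈ Γ)).card
          ≤ ((Γ.powersetCard B) ×ˢ T).card := by
        apply Finset.card_le_card_of_injOn
          (fun e => (pre e, (σf (pre e)).trans e))
        · intro e he
          simp only [Finset.mem_coe, mem_filter, mem_univ, true_and] at he
          simp only [Finset.mem_coe, mem_product, mem_powersetCard]
          refine ⟨⟨fun j hj => ?_, hpre e⟩, ?_⟩
          · simp only [hpre_def, mem_filter, mem_univ, true_and] at hj
            exact he j hj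
          · simp only [hT_def, mem_filter, mem_univ, true_and]
            intro j
            have h1 := hσf (pre e) (hpre e) j
            simp only [Equiv.trans_apply]
            rw [show ((e ((σf (pre e)) j)).1 = i ↔ (σf (pre e)) j ∈ pre e) from ?_, ← h1]
            simp [hpre_def]
        · intro e₁ h₁ e₂ h₂ h
          simp only [Prod.mk.injEq] at h
          obtain ⟨h1, h2⟩ := h
          refine Equiv.ext fun j => ?_
          have h3 := congrArg (fun f : Fin (B * ℓ) ≃ Fin ℓ × Fin B =>
            f ((σf (pre e₁)).symm j)) h2
          simpa [h1] using h3
      calc _ ≤ ((Γ.powersetCard B) ×ˢ T).card := hinj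
        _ = Nat.choose γ B * T.card := by
            rw [Finset.card_product, Finset.card_powersetCard, hΓ]
    -- Claim B: choose (B*ℓ) B * T.card ≤ (B*ℓ)!
    have claimB : Nat.choose (B * ℓ) B * T.card ≤ (B * ℓ).factorial := by
      have hinj : (((univ : Finset (Fin (B * ℓ))).powersetCard B) ×ˢ T).card
          ≤ (univ : Finset (Fin (B * ℓ) ≃ Fin ℓ × Fin B)).card := by
        apply Finset.card_le_card_of_injOn
          (fun p => (σf p.1).symm.trans p.2)
        · intro _ _; exact mem_univ _
        · intro p hp q hq h
          rw [Finset.mem_coe, mem_product, mem_powersetCard] at hp hq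
          simp only [hT_def, mem_filter, mem_univ, true_and] at hp hq
          dsimp only at h
          have recover : ∀ r : (Finset (Fin (B * ℓ))) × (Fin (B * ℓ) ≃ Fin ℓ × Fin B),
              r.1.card = B → (∀ j, (r.2 j).1 = i ↔ j ∈ S₀) →
              r.1 = pre ((σf r.1).symm.trans r.2) := by
            intro r hr1 hr2
            ext j
            simp only [hpre_def]
            rw [Finset.mem_filter]
            simp only [mem_univ, true_and, Equiv.trans_apply]
            rw [hr2]
            constructor
            · intro hj
              exact (hσf r.1 hr1 ((σf r.1).symm j)).mpr (by simpa using hj)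
            · intro hj
              have := (hσf r.1 hr1 ((σf r.1).symm j)).mp hj
              simpa using this
          have hp1 := recover p hp.1.2 hp.2
          have hq1 := recover q hq.1.2 hq.2
          have hS : p.1 = q.1 := by rw [hp1, hq1, h]
          have hf : p.2 = q.2 := by
            refine Equiv.ext fun j => ?_
            have h3 := congrArg (fun f : Fin (B * ℓ) ≃ Fin ℓ × Fin B =>
              f ((σf p.1) j)) h
            simp only [Equiv.trans_apply] at h3
            rw [hS] at h3
            simpa using h3
          exact Prod.ext hS hf
      calc Nat.choose (B * ℓ) B * T.card
          = (((univ : Finset (Fin (B * ℓ))).powersetCard B) ×ˢ T).card := by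
            rw [Finset.card_product, Finset.card_powersetCard, Finset.card_univ,
              Fintype.card_fin]
        _ ≤ (univ : Finset (Fin (B * ℓ) ≃ Fin ℓ × Fin B)).card := hinj
        _ = (B * ℓ).factorial := by rw [Finset.card_univ, hcard_equiv]
    calc (univ.filter (fun e : Fin (B * ℓ) ≃ Fin ℓ × Fin B =>
          ∀ j : Fin (B * ℓ), (e j).1 = i → j ∈ Γ)).card * Nat.choose (B * ℓ) B
        ≤ (Nat.choose γ B * T.card) * Nat.choose (B * ℓ) B :=
          Nat.mul_le_mul_right _ claimA
      _ = Nat.choose γ B * (Nat.choose (B * ℓ) B * T.card) := by ring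
      _ ≤ Nat.choose γ B * (B * ℓ).factorial := Nat.mul_le_mul_left _ claimB
  -- union bound
  have union : (univ.filter (fun e : Fin (B * ℓ) ≃ Fin ℓ × Fin B =>
      ∃ i : Fin ℓ, ∀ j : Fin (B * ℓ), (e j).1 = i → j ∈ Γ)).card
      ≤ ∑ i : Fin ℓ, (univ.filter (fun e : Fin (B * ℓ) ≃ Fin ℓ × Fin B =>
        ∀ j : Fin (B * ℓ), (e j).1 = i → j ∈ Γ)).card := by
    calc _ ≤ (univ.biUnion (fun i : Fin ℓ => univ.filter
          (fun e : Fin (B * ℓ) ≃ Fin ℓ × Fin B => ∀ j : Fin (B * ℓ), (e j).1 = i → j ∈ Γ))).card := by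
          apply Finset.card_le_card
          intro e he
          simp only [mem_filter, mem_univ, true_and] at he
          obtain ⟨i, hi⟩ := he
          exact mem_biUnion.mpr ⟨i, mem_univ i, mem_filter.mpr ⟨mem_univ e, hi⟩⟩
      _ ≤ _ := Finset.card_biUnion_le
  have total : (univ.filter (fun e : Fin (B * ℓ) ≃ Fin ℓ × Fin B =>
      ∃ i : Fin ℓ, ∀ j : Fin (B * ℓ), (e j).1 = i → j ∈ Γ)).card * Nat.choose (B * ℓ) B
      ≤ Nat.choose γ B * ℓ * (B * ℓ).factorial := by
    calc _ ≤ (∑ i : Fin ℓ, (univ.filter (fun e : Fin (B * ℓ) ≃ Fin ℓ × Fin B =>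
          ∀ j : Fin (B * ℓ), (e j).1 = i → j ∈ Γ)).card) * Nat.choose (B * ℓ) B :=
          Nat.mul_le_mul_right _ union
      _ = ∑ i : Fin ℓ, (univ.filter (fun e : Fin (B * ℓ) ≃ Fin ℓ × Fin B =>
          ∀ j : Fin (B * ℓ), (e j).1 = i → j ∈ Γ)).card * Nat.choose (B * ℓ) B := by
          rw [Finset.sum_mul]
      _ ≤ ∑ _i : Fin ℓ, Nat.choose γ B * (B * ℓ).factorial :=
          Finset.sum_le_sum (fun i _ => main i)
      _ = Nat.choose γ B * ℓ * (B * ℓ).factorial := by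
          rw [Finset.sum_const, Finset.card_univ, Fintype.card_fin]
          ring
  -- conclude in ℝ
  have hchoose_pos : (0 : ℝ) < Nat.choose (B * ℓ) B := by
    exact_mod_cast Nat.choose_pos hBn
  have hcard_pos : (0 : ℝ) < Fintype.card (Fin (B * ℓ) ≃ Fin ℓ × Fin B) := by
    rw [hcard_equiv]
    exact_mod_cast (B * ℓ).factorial_pos
  rw [div_le_div_iff₀ hcard_pos hchoose_pos]
  have hreal : ((univ.filter (fun e : Fin (B * ℓ) ≃ Fin ℓ × Fin B =>
      ∃ i : Fin ℓ, ∀ j : Fin (B * ℓ), (e j).1 = i → j ∈ Γ)).card : ℝ) * Nat.choose (B * ℓ) B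
      ≤ (Nat.choose γ B : ℝ) * ℓ * (B * ℓ).factorial := by exact_mod_cast total
  calc _ ≤ ((Nat.choose γ B : ℝ) * ℓ * (B * ℓ).factorial) := hreal
    _ = (Nat.choose γ B : ℝ) * ℓ * Fintype.card (Fin (B * ℓ) ≃ Fin ℓ × Fin B) := by
        rw [hcard_equiv]
end

section
/- For all natural numbers B ≥ 1 and γ, the real number 2^{−γ} · (γ choose B) is at most 2^{1−2B} · ((2B−1) choose B); that is, the function γ ↦ 2^{−γ}·(γ choose B) attains its maximum at γ = 2B − 1. -/
private lemma aux_ratio (B γ : ℕ) (hB : 1 ≤ B) :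
    Nat.choose γ B * B = Nat.choose γ (B-1) * (γ - (B-1)) := by
  have := Nat.choose_succ_right_eq γ (B-1)
  simp only [Nat.succ_eq_add_one, Nat.sub_add_cancel hB] at this
  exact this

private lemma aux_up (B γ : ℕ) (hB : 1 ≤ B) (hγ : γ ≤ 2*B - 2) :
    2 * Nat.choose γ B ≤ Nat.choose (γ+1) B := by
  have h1 := aux_ratio B γ hB
  have hle : γ - (B-1) ≤ B := by omega
  have h2 : Nat.choose γ B ≤ Nat.choose γ (B-1) := by
    have : Nat.choose γ B * B ≤ Nat.choose γ (B-1) * B :=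
      h1 ▸ Nat.mul_le_mul_left _ hle
    exact Nat.le_of_mul_le_mul_right this hB
  have hp : Nat.choose (γ+1) B = Nat.choose γ (B-1) + Nat.choose γ B := by
    have := Nat.choose_succ_succ γ (B-1)
    simp only [Nat.succ_eq_add_one, Nat.sub_add_cancel hB] at this
    exact this
  omega

private lemma aux_down (B γ : ℕ) (hB : 1 ≤ B) (hγ : 2*B - 1 ≤ γ) :
    Nat.choose (γ+1) B ≤ 2 * Nat.choose γ B := by
  have h1 := aux_ratio B γ hB
  have hle : B ≤ γ - (B-1) := by omega
  have h2 : Nat.choose γ (B-1) ≤ Nat.choose γ B := by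
    have : Nat.choose γ (B-1) * B ≤ Nat.choose γ B * B := by
      calc Nat.choose γ (B-1) * B ≤ Nat.choose γ (B-1) * (γ - (B-1)) :=
            Nat.mul_le_mul_left _ hle
        _ = Nat.choose γ B * B := h1.symm
    exact Nat.le_of_mul_le_mul_right this hB
  have hp : Nat.choose (γ+1) B = Nat.choose γ (B-1) + Nat.choose γ B := by
    have := Nat.choose_succ_succ γ (B-1)
    simp only [Nat.succ_eq_add_one, Nat.sub_add_cancel hB] at this
    exact this
  omega

private lemma key_nat (B γ : ℕ) (hB : 1 ≤ B) :
    2^(2*B-1) * Nat.choose γ B ≤ 2^γ * Nat.choose (2*B-1) B := by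
  obtain ⟨M, hM⟩ : ∃ M, M = 2*B-1 := ⟨_, rfl⟩
  rw [← hM]
  rcases le_or_gt γ M with h | h
  · -- increasing part: show 2^(M-γ) * choose γ ≤ choose M, induct on d = M - γ
    have main : ∀ d, d ≤ M → 2^d * Nat.choose (M-d) B ≤ Nat.choose M B := by
      intro d
      induction d with
      | zero => simp
      | succ n ih =>
        intro hd
        have hsub : M - (n+1) + 1 = M - n := by omega
        calc 2^(n+1) * Nat.choose (M-(n+1)) B
            = 2^n * (2 * Nat.choose (M-(n+1)) B) := by ring
          _ ≤ 2^n * Nat.choose (M-(n+1)+1) B :=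
              Nat.mul_le_mul_left _ (aux_up B _ hB (by omega))
          _ = 2^n * Nat.choose (M-n) B := by rw [hsub]
          _ ≤ Nat.choose M B := ih (by omega)
    have := main (M - γ) (by omega)
    rw [Nat.sub_sub_self h] at this
    calc 2^M * Nat.choose γ B = 2^γ * (2^(M-γ) * Nat.choose γ B) := by
          rw [← mul_assoc, ← pow_add]; congr 2; omega
      _ ≤ 2^γ * Nat.choose M B := Nat.mul_le_mul_left _ this
  · -- decreasing part: induct on d with γ = M + d
    have main : ∀ d, 2^M * Nat.choose (M+d) B ≤ 2^(M+d) * Nat.choose M B := by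
      intro d
      induction d with
      | zero => simp
      | succ n ih =>
        calc 2^M * Nat.choose (M+(n+1)) B
            ≤ 2^M * (2 * Nat.choose (M+n) B) :=
              Nat.mul_le_mul_left _ (aux_down B _ hB (by simp only [Nat.add_eq]; omega))
          _ = 2 * (2^M * Nat.choose (M+n) B) := by ring
          _ ≤ 2 * (2^(M+n) * Nat.choose M B) := Nat.mul_le_mul_left _ ih
          _ = 2^(M+(n+1)) * Nat.choose M B := by ring
    have := main (γ - M)
    rwa [Nat.add_sub_cancel' h.le] at this

/-- For `B ≥ 1` and every `γ`, `2^(-γ) * (γ choose B) ≤ 2^(1-2B) * ((2B-1) choose B)`;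
i.e. `γ ↦ 2^(-γ) * (γ choose B)` is maximized at `γ = 2B - 1`. -/
theorem stmt_11 (B γ : ℕ) (hB : 1 ≤ B) :
    (2 : ℝ) ^ (-(γ : ℤ)) * (Nat.choose γ B : ℝ)
      ≤ (2 : ℝ) ^ ((1 : ℤ) - 2 * (B : ℤ)) * (Nat.choose (2 * B - 1) B : ℝ) := by
  have hkey : ((2^(2*B-1) * Nat.choose γ B : ℕ) : ℝ)
      ≤ ((2^γ * Nat.choose (2*B-1) B : ℕ) : ℝ) := by
    exact_mod_cast key_nat B γ hB
  push_cast at hkey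
  have h1 : ((1:ℤ) - 2*B) = -((2*B-1 : ℕ) : ℤ) := by
    have : (((2*B-1 : ℕ)) : ℤ) = 2*B - 1 := by omega
    omega
  rw [h1, zpow_neg, zpow_neg, zpow_natCast, zpow_natCast]
  rw [inv_mul_le_iff₀ (by positivity), mul_comm ((2:ℝ)^γ), mul_assoc,
    le_inv_mul_iff₀ (by positivity)]
  exact le_of_le_of_eq hkey (mul_comm _ _)
end

section
/- For all natural numbers B and ℓ with 2 ≤ B < ℓ, one has (2B−1)! · (Bℓ − B)! · (Bℓ)^B < (B−1)! · (Bℓ)! · (2B)^B; equivalently, (2B−1)!·(Bℓ−B)! / ((B−1)!·(Bℓ)!) < (2B)^B / (Bℓ)^B as real numbers. -/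
open Finset Nat

lemma asc_prod (n k : ℕ) : n.ascFactorial k = ∏ i ∈ range k, (n + i) := by
  induction k with
  | zero => simp
  | succ k ih => rw [Nat.ascFactorial_succ, prod_range_succ, ih, mul_comm]

lemma four_mul_le (a b : ℕ) : 4 * (a * b) ≤ (a + b) ^ 2 := by
  rcases le_total a b with h | h
  · obtain ⟨c, rfl⟩ := Nat.exists_eq_add_of_le h
    nlinarith [sq_nonneg c]
  · obtain ⟨c, rfl⟩ := Nat.exists_eq_add_of_le h
    nlinarith [sq_nonneg c]

lemma base_case (B : ℕ) (hB : 2 ≤ B) :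
    Nat.factorial (2 * B - 1) * Nat.factorial (B * (B + 1) - B) * (B * (B + 1)) ^ B <
      Nat.factorial (B - 1) * Nat.factorial (B * (B + 1)) * (2 * B) ^ B := by
  set P := B.ascFactorial B with hPdef
  set Q := (B ^ 2 + 1).ascFactorial B with hQdef
  have hP : (B - 1)! * P = (2 * B - 1)! := by
    have := Nat.factorial_mul_ascFactorial (B - 1) B
    have h1 : B - 1 + 1 = B := by omega
    have h2 : B - 1 + B = 2 * B - 1 := by omega
    rwa [h1, h2] at this
  have hQ : (B ^ 2)! * Q = (B * (B + 1))! := by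
    have := Nat.factorial_mul_ascFactorial (B ^ 2) B
    have h1 : B ^ 2 + B = B * (B + 1) := by ring
    rwa [h1] at this
  have hsub : B * (B + 1) - B = B ^ 2 := by
    have : B * (B + 1) = B ^ 2 + B := by ring
    omega
  -- squared bound on P
  have hPP : 4 ^ B * P ^ 2 ≤ (3 * B - 1) ^ (2 * B) := by
    have hP1 : P = ∏ i ∈ range B, (B + i) := asc_prod B B
    have hP2 : P = ∏ i ∈ range B, (B + (B - 1 - i)) := by
      rw [hP1]; exact (prod_range_reflect (fun i => B + i) B).symm
    have hprod : 4 ^ B * P ^ 2 = ∏ i ∈ range B, (4 * ((B + i) * (B + (B - 1 - i)))) := by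
      rw [prod_mul_distrib, prod_mul_distrib, prod_const, card_range, pow_two]
      nth_rewrite 1 [hP1]
      nth_rewrite 1 [hP2]
      ring
    rw [hprod]
    calc ∏ i ∈ range B, (4 * ((B + i) * (B + (B - 1 - i))))
        ≤ ∏ _i ∈ range B, (3 * B - 1) ^ 2 := by
          apply Finset.prod_le_prod'
          intro i hi
          rw [mem_range] at hi
          have hab : (B + i) + (B + (B - 1 - i)) = 3 * B - 1 := by omega
          rw [← hab]
          exact four_mul_le _ _
      _ = (3 * B - 1) ^ (2 * B) := by rw [prod_const, card_range, ← pow_mul, Nat.mul_comm]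
  have hQQ : (B ^ 2 + 1) ^ B ≤ Q := by
    rw [hQdef, asc_prod]
    calc (B ^ 2 + 1) ^ B = ∏ _i ∈ range B, (B ^ 2 + 1) := by rw [prod_const, card_range]
      _ ≤ ∏ i ∈ range B, (B ^ 2 + 1 + i) := by
          apply Finset.prod_le_prod'
          intro i _; omega
  -- key inequality
  have key : P * (B * (B + 1)) ^ B < Q * (2 * B) ^ B := by
    refine (Nat.pow_lt_pow_iff_left (n := 2) (by norm_num)).mp ?_
    have h4 : 4 ^ B * (P * (B * (B + 1)) ^ B) ^ 2 < 4 ^ B * (Q * (2 * B) ^ B) ^ 2 := by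
      calc 4 ^ B * (P * (B * (B + 1)) ^ B) ^ 2
          = (4 ^ B * P ^ 2) * ((B * (B + 1)) ^ B) ^ 2 := by ring
        _ ≤ (3 * B - 1) ^ (2 * B) * ((B * (B + 1)) ^ B) ^ 2 :=
            Nat.mul_le_mul_right _ hPP
        _ = ((3 * B - 1) * (B * (B + 1))) ^ (2 * B) := by
            rw [show ((B * (B + 1)) ^ B) ^ 2 = (B * (B + 1)) ^ (2 * B) by
              rw [← pow_mul, Nat.mul_comm B 2], mul_pow (3 * B - 1) (B * (B + 1)) (2 * B)]
        _ < (4 * B * (B ^ 2 + 1)) ^ (2 * B) := by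
            apply Nat.pow_lt_pow_left _ (by omega)
            have h1 : (3 * B - 1) * (B * (B + 1)) ≤ 3 * B * (B * (B + 1)) :=
              Nat.mul_le_mul_right _ (by omega)
            have h2 : 3 * B * (B * (B + 1)) < 4 * B * (B ^ 2 + 1) := by
              zify; nlinarith [sq_nonneg ((B : ℤ) - 2), hB]
            omega
        _ = 4 ^ B * (((B ^ 2 + 1) ^ B) ^ 2 * ((2 * B) ^ B) ^ 2) := by
            rw [show (((B ^ 2 + 1)) ^ B) ^ 2 = (B ^ 2 + 1) ^ (2 * B) by rw [← pow_mul, Nat.mul_comm B 2],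
               show (((2 * B)) ^ B) ^ 2 = (2 * B) ^ (2 * B) by rw [← pow_mul, Nat.mul_comm B 2],
               mul_pow (4 * B) (B ^ 2 + 1) (2 * B), mul_pow 4 B (2 * B), mul_pow 2 B (2 * B),
               show (4 : ℕ) ^ (2 * B) = 4 ^ B * 4 ^ B by rw [two_mul, pow_add],
               show (2 : ℕ) ^ (2 * B) = 4 ^ B by rw [pow_mul]; norm_num]
            ring
        _ ≤ 4 ^ B * (Q ^ 2 * ((2 * B) ^ B) ^ 2) := by
            apply Nat.mul_le_mul_left
            exact Nat.mul_le_mul_right _ (Nat.pow_le_pow_left hQQ 2)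
        _ = 4 ^ B * (Q * (2 * B) ^ B) ^ 2 := by ring
    exact Nat.lt_of_mul_lt_mul_left h4
  rw [hsub, ← hP, ← hQ]
  calc (B - 1)! * P * (B ^ 2)! * (B * (B + 1)) ^ B
      = ((B - 1)! * (B ^ 2)!) * (P * (B * (B + 1)) ^ B) := by ring
    _ < ((B - 1)! * (B ^ 2)!) * (Q * (2 * B) ^ B) := by
        exact (Nat.mul_lt_mul_left
          (Nat.mul_pos (Nat.factorial_pos _) (Nat.factorial_pos _))).mpr key
    _ = (B - 1)! * ((B ^ 2)! * Q) * (2 * B) ^ B := by ring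

/-- For `2 ≤ B < ℓ` one has
`(2B-1)! · (Bℓ-B)! · (Bℓ)^B < (B-1)! · (Bℓ)! · (2B)^B`. -/
theorem stmt_12 (B ℓ : ℕ) (hB : 2 ≤ B) (hℓ : B < ℓ) :
    Nat.factorial (2 * B - 1) * Nat.factorial (B * ℓ - B) * (B * ℓ) ^ B <
      Nat.factorial (B - 1) * Nat.factorial (B * ℓ) * (2 * B) ^ B := by
  induction ℓ, hℓ using Nat.le_induction with
  | base => exact base_case B hB
  | succ ℓ hℓ ih =>
    have hm' : B ≤ B * ℓ := Nat.le_mul_of_pos_right B (by omega)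
    set m := B * ℓ - B with hmdef
    have hm : B * ℓ = m + B := by omega
    have hBl1 : B * (ℓ + 1) = B * ℓ + B := by ring
    have hsub : B * (ℓ + 1) - B = B * ℓ := by omega
    set A := (m + 1).ascFactorial B with hAdef
    set C := (B * ℓ + 1).ascFactorial B with hCdef
    have hA : m ! * A = (B * ℓ)! := by
      have := Nat.factorial_mul_ascFactorial m B
      rwa [← hm] at this
    have hC : (B * ℓ)! * C = (B * (ℓ + 1))! := by
      have := Nat.factorial_mul_ascFactorial (B * ℓ) B
      rwa [← hBl1] at this
    have hCpos : 0 < C := by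
      have hC0 : C ≠ 0 := by
        intro h0
        rw [h0, Nat.mul_zero] at hC
        exact (Nat.factorial_ne_zero _) hC.symm
      omega
    have hpow : 0 < (B * ℓ) ^ B := pow_pos (Nat.mul_pos (by omega) (by omega)) B
    have key2 : A * (B * (ℓ + 1)) ^ B ≤ C * (B * ℓ) ^ B := by
      rw [hAdef, hCdef, asc_prod, asc_prod]
      rw [show (B * (ℓ + 1)) ^ B = ∏ _i ∈ range B, (B * (ℓ + 1)) by rw [prod_const, card_range]]
      rw [show (B * ℓ) ^ B = ∏ _i ∈ range B, (B * ℓ) by rw [prod_const, card_range]]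
      rw [← prod_mul_distrib, ← prod_mul_distrib]
      apply Finset.prod_le_prod'
      intro i hi
      rw [mem_range] at hi
      rw [hm, hBl1, hm]
      have hiB : B * (i + 1) ≤ B * B := Nat.mul_le_mul_left B hi
      nlinarith [hiB]
    have main2 : ((2 * B - 1)! * (B * ℓ)! * (B * (ℓ + 1)) ^ B) * (B * ℓ) ^ B <
        ((B - 1)! * (B * (ℓ + 1))! * (2 * B) ^ B) * (B * ℓ) ^ B := by
      calc ((2 * B - 1)! * (B * ℓ)! * (B * (ℓ + 1)) ^ B) * (B * ℓ) ^ B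
          = ((2 * B - 1)! * m ! * (B * ℓ) ^ B) * (A * (B * (ℓ + 1)) ^ B) := by
            rw [← hA]; ring
        _ ≤ ((2 * B - 1)! * m ! * (B * ℓ) ^ B) * (C * (B * ℓ) ^ B) :=
            Nat.mul_le_mul_left _ key2
        _ = (((2 * B - 1)! * m ! * (B * ℓ) ^ B) * C) * (B * ℓ) ^ B := by ring
        _ < (((B - 1)! * (B * ℓ)! * (2 * B) ^ B) * C) * (B * ℓ) ^ B := by
            refine (Nat.mul_lt_mul_right hpow).mpr ?_
            refine (Nat.mul_lt_mul_right hCpos).mpr ?_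
            exact ih
        _ = ((B - 1)! * ((B * ℓ)! * C) * (2 * B) ^ B) * (B * ℓ) ^ B := by ring
        _ = ((B - 1)! * (B * (ℓ + 1))! * (2 * B) ^ B) * (B * ℓ) ^ B := by rw [hC]
    rw [hsub]
    exact lt_of_mul_lt_mul_right main2 (Nat.zero_le _)
end

section
/- For all natural numbers B and ℓ with 2 ≤ B < ℓ, the real number α'(B,ℓ) := 2^{1−2B} · ℓ · (2B−1)!·(Bℓ−B)! / ((B−1)!·(Bℓ)!) satisfies α'(B,ℓ) ≤ (2ℓ)^{1−B}. -/
/-- For `2 ≤ B < ℓ`, the quantity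
`α'(B,ℓ) = 2^(1-2B) · ℓ · (2B-1)!·(Bℓ-B)! / ((B-1)!·(Bℓ)!)` satisfies
`α'(B,ℓ) ≤ (2ℓ)^(1-B)`. -/
theorem stmt_13 (B ℓ : ℕ) (hB : 2 ≤ B) (hℓ : B < ℓ) :
    (2 : ℝ) ^ ((1 : ℤ) - 2 * (B : ℤ)) * (ℓ : ℝ) *
        ((Nat.factorial (2 * B - 1) : ℝ) * (Nat.factorial (B * ℓ - B) : ℝ)) /
        ((Nat.factorial (B - 1) : ℝ) * (Nat.factorial (B * ℓ) : ℝ))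
      ≤ (2 * (ℓ : ℝ)) ^ ((1 : ℤ) - (B : ℤ)) := by
  have hℓ3 : 3 ≤ ℓ := by omega
  have hBl : B ≤ B * ℓ := Nat.le_mul_of_pos_right _ (by omega)
  set D1 := Nat.descFactorial (2 * B - 1) B with hD1def
  set D2 := Nat.descFactorial (B * ℓ) B with hD2def
  have h1 : Nat.factorial (B - 1) * D1 = Nat.factorial (2 * B - 1) := by
    have := Nat.factorial_mul_descFactorial (show B ≤ 2 * B - 1 by omega)
    rwa [show 2 * B - 1 - B = B - 1 by omega] at this
  have h2 : Nat.factorial (B * ℓ - B) * D2 = Nat.factorial (B * ℓ) :=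
    Nat.factorial_mul_descFactorial hBl
  have key : ℓ ^ B * D1 ≤ 2 ^ B * D2 := by
    rw [hD1def, hD2def, Nat.descFactorial_eq_prod_range, Nat.descFactorial_eq_prod_range]
    calc ℓ ^ B * ∏ i ∈ Finset.range B, (2 * B - 1 - i)
        = ∏ i ∈ Finset.range B, ℓ * (2 * B - 1 - i) := by
          rw [Finset.prod_mul_distrib, Finset.prod_const, Finset.card_range]
      _ ≤ ∏ i ∈ Finset.range B, 2 * (B * ℓ - i) := by
          apply Finset.prod_le_prod'
          intro i hi
          rw [Finset.mem_range] at hi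
          have hi1 : i ≤ 2 * B - 1 := by omega
          have hi2 : i ≤ B * ℓ := le_trans (by omega) hBl
          zify [hi1, hi2, show 1 ≤ 2 * B by omega]
          nlinarith [mul_nonneg (by positivity : (0:ℤ) ≤ (i:ℤ))
            (by omega : (0:ℤ) ≤ (ℓ:ℤ) - 2)]
      _ = 2 ^ B * ∏ i ∈ Finset.range B, (B * ℓ - i) := by
          rw [Finset.prod_mul_distrib, Finset.prod_const, Finset.card_range]
  -- positivity facts
  have ha : (0:ℝ) < Nat.factorial (B - 1) := by positivity
  have hf : (0:ℝ) < Nat.factorial (B * ℓ - B) := by positivity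
  have hd2 : (0:ℝ) < (D2 : ℝ) := by
    have h0 : 0 < D2 := by
      rcases Nat.eq_zero_or_pos D2 with h | h
      · exfalso
        have hp := Nat.factorial_pos (B * ℓ)
        rw [← h2, h, mul_zero] at hp
        exact absurd hp (lt_irrefl 0)
      · exact h
    exact_mod_cast h0
  have hℓ0 : (0:ℝ) < (ℓ : ℝ) := by positivity
  have e1 : (Nat.factorial (2 * B - 1) : ℝ) = (Nat.factorial (B - 1) : ℝ) * D1 := by
    exact_mod_cast h1.symm
  have e2 : (Nat.factorial (B * ℓ) : ℝ) = (Nat.factorial (B * ℓ - B) : ℝ) * D2 := by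
    exact_mod_cast h2.symm
  rw [e1, e2]
  have lhs_eq : (2 : ℝ) ^ ((1 : ℤ) - 2 * (B : ℤ)) * (ℓ : ℝ) *
      (((Nat.factorial (B - 1) : ℝ) * D1) * ((Nat.factorial (B * ℓ - B) : ℝ))) /
      ((Nat.factorial (B - 1) : ℝ) * ((Nat.factorial (B * ℓ - B) : ℝ) * D2))
      = (2 : ℝ) ^ ((1 : ℤ) - 2 * (B : ℤ)) * (ℓ : ℝ) * D1 / D2 := by
    field_simp
  rw [lhs_eq, div_le_iff₀ hd2, mul_zpow]
  have keyR : (ℓ : ℝ) ^ (B : ℤ) * D1 ≤ (2:ℝ) ^ (B : ℤ) * D2 := by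
    rw [zpow_natCast, zpow_natCast]
    exact_mod_cast key
  have c_pos : (0:ℝ) < (2:ℝ) ^ ((1 : ℤ) - 2 * (B : ℤ)) * (ℓ:ℝ) ^ ((1 : ℤ) - (B : ℤ)) := by
    positivity
  calc (2 : ℝ) ^ ((1 : ℤ) - 2 * (B : ℤ)) * (ℓ : ℝ) * D1
      = ((2:ℝ) ^ ((1 : ℤ) - 2 * (B : ℤ)) * (ℓ:ℝ) ^ ((1 : ℤ) - (B : ℤ))) *
        ((ℓ : ℝ) ^ (B : ℤ) * D1) := by
        rw [show ((2:ℝ) ^ ((1 : ℤ) - 2 * (B : ℤ)) * (ℓ:ℝ) ^ ((1 : ℤ) - (B : ℤ))) *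
            ((ℓ : ℝ) ^ (B : ℤ) * D1) =
            (2:ℝ) ^ ((1 : ℤ) - 2 * (B : ℤ)) *
            ((ℓ:ℝ) ^ ((1 : ℤ) - (B : ℤ)) * (ℓ : ℝ) ^ (B : ℤ)) * D1 by ring,
          ← zpow_add₀ (ne_of_gt hℓ0)]
        norm_num
    _ ≤ ((2:ℝ) ^ ((1 : ℤ) - 2 * (B : ℤ)) * (ℓ:ℝ) ^ ((1 : ℤ) - (B : ℤ))) *
        ((2:ℝ) ^ (B : ℤ) * D2) := by
        exact mul_le_mul_of_nonneg_left keyR (le_of_lt c_pos)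
    _ = (2:ℝ) ^ ((1 : ℤ) - (B : ℤ)) * (ℓ:ℝ) ^ ((1 : ℤ) - (B : ℤ)) * D2 := by
        rw [show ((2:ℝ) ^ ((1 : ℤ) - 2 * (B : ℤ)) * (ℓ:ℝ) ^ ((1 : ℤ) - (B : ℤ))) *
            ((2:ℝ) ^ (B : ℤ) * D2) =
            ((2:ℝ) ^ ((1 : ℤ) - 2 * (B : ℤ)) * (2:ℝ) ^ (B : ℤ)) *
            (ℓ:ℝ) ^ ((1 : ℤ) - (B : ℤ)) * D2 by ring,
          ← zpow_add₀ (by norm_num : (2:ℝ) ≠ 0)]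
        ring_nf
end

section
/- For all natural numbers γ, B, ℓ with 2 ≤ B < ℓ, the real number 2^{−γ} · (γ choose B) · ℓ / ((Bℓ) choose B) is at most (2ℓ)^{1−B}. (This bounds the probability that an adversary making γ guesses in the leaky-AND/leaky-OT box goes undetected and fills some bucket entirely with leaky objects.) -/
-- Pascal with subtraction: choose (n+1) B = choose n (B-1) + choose n B, for 1 ≤ B
lemma aux_pascal (n B : ℕ) (hB : 1 ≤ B) :
    Nat.choose (n + 1) B = Nat.choose n (B - 1) + Nat.choose n B := by
  have hB1 : B - 1 + 1 = B := by omega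
  calc Nat.choose (n + 1) B = Nat.choose (n + 1) (B - 1 + 1) := by rw [hB1]
    _ = Nat.choose n (B - 1) + Nat.choose n (B - 1 + 1) := Nat.choose_succ_succ n (B - 1)
    _ = Nat.choose n (B - 1) + Nat.choose n B := by rw [hB1]

-- choose n B ≤ choose n (B-1) when n+1 ≤ 2B (B ≥ 1)
lemma aux_mono1 (n B : ℕ) (hB : 1 ≤ B) (h : n + 1 ≤ 2 * B) :
    Nat.choose n B ≤ Nat.choose n (B - 1) := by
  have hid := Nat.choose_succ_right_eq n (B - 1)
  have hB1 : B - 1 + 1 = B := by omega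
  rw [hB1] at hid
  have h1 : n - (B - 1) ≤ B := by omega
  have : Nat.choose n B * B ≤ Nat.choose n (B - 1) * B := by
    rw [hid]
    exact Nat.mul_le_mul_left _ h1
  exact Nat.le_of_mul_le_mul_right this (by omega)

-- choose n (B-1) ≤ choose n B when 2B ≤ n (B ≥ 1)
lemma aux_mono2 (n B : ℕ) (hB : 1 ≤ B) (h : 2 * B ≤ n) :
    Nat.choose n (B - 1) ≤ Nat.choose n B := by
  have hid := Nat.choose_succ_right_eq n (B - 1)
  have hB1 : B - 1 + 1 = B := by omega
  rw [hB1] at hid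
  have h1 : B ≤ n - (B - 1) := by omega
  have : Nat.choose n (B - 1) * B ≤ Nat.choose n B * B := by
    rw [hid]
    exact Nat.mul_le_mul_left _ h1
  exact Nat.le_of_mul_le_mul_right this (by omega)

lemma aux_A1 (B : ℕ) (hB : 1 ≤ B) : ∀ d : ℕ,
    Nat.choose (2 * B - d) B * 2 ^ d ≤ Nat.choose (2 * B) B := by
  intro d
  induction d with
  | zero => simp
  | succ d ih =>
    by_cases hd : 2 * B ≤ d
    · have h0 : 2 * B - (d + 1) = 0 := by omega
      rw [h0, Nat.choose_eq_zero_of_lt (by omega), Nat.zero_mul]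
      exact Nat.zero_le _
    · push_neg at hd
      set n := 2 * B - (d + 1) with hn
      have hsucc : n + 1 = 2 * B - d := by omega
      have hmono : Nat.choose n B ≤ Nat.choose n (B - 1) := aux_mono1 n B hB (by omega)
      have hps := aux_pascal n B hB
      have h2 : 2 * Nat.choose n B ≤ Nat.choose (n + 1) B := by omega
      calc Nat.choose n B * 2 ^ (d + 1) = 2 * Nat.choose n B * 2 ^ d := by ring
        _ ≤ Nat.choose (n + 1) B * 2 ^ d := Nat.mul_le_mul_right _ h2
        _ = Nat.choose (2 * B - d) B * 2 ^ d := by rw [hsucc]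
        _ ≤ Nat.choose (2 * B) B := ih

lemma aux_A2 (B : ℕ) (hB : 1 ≤ B) : ∀ d : ℕ,
    Nat.choose (2 * B + d) B ≤ 2 ^ d * Nat.choose (2 * B) B := by
  intro d
  induction d with
  | zero => simp
  | succ d ih =>
    have hmono : Nat.choose (2 * B + d) (B - 1) ≤ Nat.choose (2 * B + d) B :=
      aux_mono2 _ B hB (by omega)
    have hps := aux_pascal (2 * B + d) B hB
    have h2 : Nat.choose (2 * B + d + 1) B ≤ 2 * Nat.choose (2 * B + d) B := by omega
    calc Nat.choose (2 * B + (d + 1)) B = Nat.choose (2 * B + d + 1) B := by ring_nf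
      _ ≤ 2 * Nat.choose (2 * B + d) B := h2
      _ ≤ 2 * (2 ^ d * Nat.choose (2 * B) B) := Nat.mul_le_mul_left _ ih
      _ = 2 ^ (d + 1) * Nat.choose (2 * B) B := by ring

-- Claim A : choose γ B / 2^γ is maximized at γ = 2B
lemma aux_A (γ B : ℕ) (hB : 1 ≤ B) :
    Nat.choose γ B * 2 ^ (2 * B) ≤ 2 ^ γ * Nat.choose (2 * B) B := by
  rcases le_or_gt γ (2 * B) with h | h
  · have hA1 := aux_A1 B hB (2 * B - γ)
    have hγ : 2 * B - (2 * B - γ) = γ := by omega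
    rw [hγ] at hA1
    calc Nat.choose γ B * 2 ^ (2 * B)
        = (Nat.choose γ B * 2 ^ (2 * B - γ)) * 2 ^ γ := by
          rw [mul_assoc, ← pow_add]; congr 2; omega
      _ ≤ Nat.choose (2 * B) B * 2 ^ γ := Nat.mul_le_mul_right _ hA1
      _ = 2 ^ γ * Nat.choose (2 * B) B := by ring
  · have hA2 := aux_A2 B hB (γ - 2 * B)
    have hγ : 2 * B + (γ - 2 * B) = γ := by omega
    rw [hγ] at hA2
    calc Nat.choose γ B * 2 ^ (2 * B)
        ≤ (2 ^ (γ - 2 * B) * Nat.choose (2 * B) B) * 2 ^ (2 * B) :=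
          Nat.mul_le_mul_right _ hA2
      _ = 2 ^ γ * Nat.choose (2 * B) B := by
          rw [mul_assoc, mul_comm (Nat.choose (2 * B) B), ← mul_assoc, ← pow_add]
          congr 2; omega

-- Claim B, descFactorial version
lemma aux_Bdesc (B ℓ : ℕ) (hℓ : 2 ≤ ℓ) : ∀ k, k ≤ B →
    Nat.descFactorial (2 * B) k * ℓ ^ k ≤ 2 ^ k * Nat.descFactorial (B * ℓ) k := by
  intro k
  induction k with
  | zero => simp
  | succ k ih =>
    intro hk
    have ih' := ih (by omega)
    rw [Nat.descFactorial_succ, Nat.descFactorial_succ]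
    have hterm : (2 * B - k) * ℓ ≤ 2 * (B * ℓ - k) := by
      have h1 : k * 2 ≤ k * ℓ := Nat.mul_le_mul_left _ hℓ
      have h2 : k * ℓ ≤ B * ℓ := Nat.mul_le_mul_right _ (by omega)
      have h3 : (2 * B - k) * ℓ = 2 * (B * ℓ) - k * ℓ := by
        rw [Nat.sub_mul]; ring_nf
      omega
    calc (2 * B - k) * Nat.descFactorial (2 * B) k * ℓ ^ (k + 1)
        = ((2 * B - k) * ℓ) * (Nat.descFactorial (2 * B) k * ℓ ^ k) := by ring
      _ ≤ (2 * (B * ℓ - k)) * (2 ^ k * Nat.descFactorial (B * ℓ) k) :=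
          Nat.mul_le_mul hterm ih'
      _ = 2 ^ (k + 1) * ((B * ℓ - k) * Nat.descFactorial (B * ℓ) k) := by ring

-- Claim B, choose version
lemma aux_B (B ℓ : ℕ) (hℓ : 2 ≤ ℓ) :
    Nat.choose (2 * B) B * ℓ ^ B ≤ 2 ^ B * Nat.choose (B * ℓ) B := by
  have h := aux_Bdesc B ℓ hℓ B le_rfl
  rw [Nat.descFactorial_eq_factorial_mul_choose, Nat.descFactorial_eq_factorial_mul_choose] at h
  have hfac : 0 < Nat.factorial B := Nat.factorial_pos B
  have hmul : Nat.factorial B * (Nat.choose (2 * B) B * ℓ ^ B)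
      ≤ Nat.factorial B * (2 ^ B * Nat.choose (B * ℓ) B) := by
    calc Nat.factorial B * (Nat.choose (2 * B) B * ℓ ^ B)
        = Nat.factorial B * Nat.choose (2 * B) B * ℓ ^ B := by ring
      _ ≤ 2 ^ B * (Nat.factorial B * Nat.choose (B * ℓ) B) := h
      _ = Nat.factorial B * (2 ^ B * Nat.choose (B * ℓ) B) := by ring
  exact Nat.le_of_mul_le_mul_left hmul hfac

-- combined nat inequality
lemma aux_key (γ B ℓ : ℕ) (hB : 2 ≤ B) (hℓ : B < ℓ) :
    Nat.choose γ B * ℓ * (2 * ℓ) ^ B ≤ 2 * ℓ * (2 ^ γ * Nat.choose (B * ℓ) B) := by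
  have hℓ2 : 2 ≤ ℓ := by omega
  have hA := aux_A γ B (by omega)
  have hB' := aux_B B ℓ hℓ2
  have hc : 0 < Nat.choose (2 * B) B := Nat.choose_pos (by omega)
  have h1 : Nat.choose γ B * 2 ^ (2 * B) * ℓ ^ B * Nat.choose (2 * B) B
      ≤ 2 ^ γ * 2 ^ B * Nat.choose (B * ℓ) B * Nat.choose (2 * B) B := by
    calc Nat.choose γ B * 2 ^ (2 * B) * ℓ ^ B * Nat.choose (2 * B) B
        = (Nat.choose γ B * 2 ^ (2 * B)) * (Nat.choose (2 * B) B * ℓ ^ B) := by ring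
      _ ≤ (2 ^ γ * Nat.choose (2 * B) B) * (2 ^ B * Nat.choose (B * ℓ) B) :=
          Nat.mul_le_mul hA hB'
      _ = 2 ^ γ * 2 ^ B * Nat.choose (B * ℓ) B * Nat.choose (2 * B) B := by ring
  have h2 : Nat.choose γ B * 2 ^ (2 * B) * ℓ ^ B ≤ 2 ^ γ * 2 ^ B * Nat.choose (B * ℓ) B :=
    Nat.le_of_mul_le_mul_right h1 hc
  have h3 : Nat.choose γ B * ℓ * (2 * ℓ) ^ B = Nat.choose γ B * 2 ^ B * ℓ ^ B * ℓ := by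
    rw [mul_pow]; ring
  rw [h3]
  have hcancel : Nat.choose γ B * 2 ^ B * ℓ ^ B * ℓ * 2 ^ B
      ≤ 2 * ℓ * (2 ^ γ * Nat.choose (B * ℓ) B) * 2 ^ B := by
    calc Nat.choose γ B * 2 ^ B * ℓ ^ B * ℓ * 2 ^ B
        = (Nat.choose γ B * 2 ^ (2 * B) * ℓ ^ B) * ℓ := by
          rw [two_mul, pow_add]; ring
      _ ≤ (2 ^ γ * 2 ^ B * Nat.choose (B * ℓ) B) * ℓ := Nat.mul_le_mul_right _ h2
      _ = 1 * (ℓ * (2 ^ γ * Nat.choose (B * ℓ) B) * 2 ^ B) := by ring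
      _ ≤ 2 * (ℓ * (2 ^ γ * Nat.choose (B * ℓ) B) * 2 ^ B) :=
          Nat.mul_le_mul_right _ (by norm_num)
      _ = 2 * ℓ * (2 ^ γ * Nat.choose (B * ℓ) B) * 2 ^ B := by ring
  exact Nat.le_of_mul_le_mul_right hcancel (pow_pos (by norm_num) B)

/-- For `2 ≤ B < ℓ` and every `γ`,
`2^(-γ) · (γ choose B) · ℓ / ((Bℓ) choose B) ≤ (2ℓ)^(1-B)`. -/
theorem stmt_14 (γ B ℓ : ℕ) (hB : 2 ≤ B) (hℓ : B < ℓ) :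
    (2 : ℝ) ^ (-(γ : ℤ)) * (Nat.choose γ B : ℝ) * (ℓ : ℝ) / (Nat.choose (B * ℓ) B : ℝ)
      ≤ (2 * (ℓ : ℝ)) ^ ((1 : ℤ) - (B : ℤ)) := by
  have hℓpos : (0 : ℝ) < ℓ := by exact_mod_cast (by omega : 0 < ℓ)
  have h2ℓ : (0 : ℝ) < 2 * ℓ := by linarith
  have hcpos : (0 : ℝ) < (Nat.choose (B * ℓ) B : ℝ) := by
    have : 0 < Nat.choose (B * ℓ) B := Nat.choose_pos (by nlinarith)
    exact_mod_cast this
  have hlhs : (2 : ℝ) ^ (-(γ : ℤ)) * (Nat.choose γ B : ℝ) * (ℓ : ℝ)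
      / (Nat.choose (B * ℓ) B : ℝ)
      = ((Nat.choose γ B : ℝ) * ℓ) / (2 ^ γ * (Nat.choose (B * ℓ) B : ℝ)) := by
    rw [zpow_neg, zpow_natCast]
    field_simp
  have hrhs : (2 * (ℓ : ℝ)) ^ ((1 : ℤ) - (B : ℤ)) = (2 * (ℓ : ℝ)) / (2 * (ℓ : ℝ)) ^ B := by
    rw [zpow_sub₀ (ne_of_gt h2ℓ), zpow_one, zpow_natCast]
  rw [hlhs, hrhs]
  rw [div_le_div_iff₀ (by positivity) (by positivity)]
  have hkey := aux_key γ B ℓ hB hℓ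
  calc (Nat.choose γ B : ℝ) * ℓ * (2 * ℓ) ^ B
      = ((Nat.choose γ B * ℓ * (2 * ℓ) ^ B : ℕ) : ℝ) := by push_cast; ring
    _ ≤ ((2 * ℓ * (2 ^ γ * Nat.choose (B * ℓ) B) : ℕ) : ℝ) := by exact_mod_cast hkey
    _ = 2 * (ℓ : ℝ) * (2 ^ γ * (Nat.choose (B * ℓ) B : ℝ)) := by push_cast; ring
end

section
/- Let κ and p be natural numbers, let b : Fin p → ZMod 2 be arbitrary fixed bits, and let Δ, K_1, …, K_p be drawn independently and uniformly at random from the vectors Fin κ → ZMod 2, with MACs M_i = K_i + b_i • Δ. Then for every function f : (Fin p → (Fin κ → ZMod 2)) → (Fin κ → ZMod 2), the probability that f(M_1, …, M_p) = Δ is exactly 2^{−κ}. -/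
open scoped ENNReal

/-- With `Δ` and the keys `K₁, …, K_p` drawn independently and uniformly from
`Fin κ → ZMod 2` and MACs `Mᵢ = Kᵢ + bᵢ • Δ`, any adversary `f` seeing all MACs guesses
the global key `Δ` with probability exactly `2^(-κ)`. -/
theorem stmt_16 (κ p : ℕ) (b : Fin p → ZMod 2)
    (f : (Fin p → Fin κ → ZMod 2) → (Fin κ → ZMod 2)) :
    ∑ x : (Fin κ → ZMod 2) × (Fin p → Fin κ → ZMod 2),
      (PMF.uniformOfFintype ((Fin κ → ZMod 2) × (Fin p → Fin κ → ZMod 2))) x *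
        (if f (fun i => x.2 i + b i • x.1) = x.1 then 1 else 0)
    = (2 : ℝ≥0∞) ^ (-(κ : ℤ)) := by
  classical
  set X := (Fin κ → ZMod 2) × (Fin p → Fin κ → ZMod 2)
  have hinv : Function.Involutive
      (fun x : X => (x.1, fun i => x.2 i + b i • x.1)) := by
    intro x
    have h2 : ∀ a : ZMod 2, a + a = 0 := by decide
    ext i j
    · rfl
    · simp [add_assoc, h2]
  let e : Equiv.Perm X := hinv.toPerm _
  have key : ∑ x : X, (if f (fun i => x.2 i + b i • x.1) = x.1 then (1:ℝ≥0∞) else 0)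
      = (Fintype.card (Fin p → Fin κ → ZMod 2) : ℝ≥0∞) := by
    have := Equiv.sum_comp e (fun y : X => if f y.2 = y.1 then (1:ℝ≥0∞) else 0)
    have h1 : ∑ x : X, (if f (fun i => x.2 i + b i • x.1) = x.1 then (1:ℝ≥0∞) else 0)
        = ∑ y : X, (if f y.2 = y.1 then (1:ℝ≥0∞) else 0) := by
      rw [← this]; rfl
    rw [h1, Fintype.sum_prod_type_right]
    have h2 : ∀ m : Fin p → Fin κ → ZMod 2,
        ∑ a : Fin κ → ZMod 2, (if f m = a then (1:ℝ≥0∞) else 0) = 1 := by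
      intro m
      simp
    simp [h2]
  calc ∑ x : X, (PMF.uniformOfFintype X) x *
        (if f (fun i => x.2 i + b i • x.1) = x.1 then 1 else 0)
      = (Fintype.card X : ℝ≥0∞)⁻¹ *
        ∑ x : X, (if f (fun i => x.2 i + b i • x.1) = x.1 then (1:ℝ≥0∞) else 0) := by
        rw [Finset.mul_sum]
        refine Finset.sum_congr rfl fun x _ => ?_
        rw [PMF.uniformOfFintype_apply]
    _ = (2 : ℝ≥0∞) ^ (-(κ : ℤ)) := by
        rw [key]
        have hc : (Fintype.card X : ℝ≥0∞)
            = (2:ℝ≥0∞)^κ * (Fintype.card (Fin p → Fin κ → ZMod 2) : ℝ≥0∞) := by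
          simp [X, Fintype.card_prod, Fintype.card_fun]
        rw [hc, ENNReal.mul_inv (by simp) (by simp), mul_assoc,
          ENNReal.inv_mul_cancel (by simp [Fintype.card_fun]) (by simp), mul_one,
          ENNReal.zpow_neg, zpow_natCast]
end

section
/- Let κ and p be natural numbers, let b : Fin p → ZMod 2 be arbitrary fixed bits, and let Δ, K_1, …, K_p be drawn independently and uniformly at random from the vectors Fin κ → ZMod 2, with MACs M_i = K_i + b_i • Δ. Then for every function f : (Fin p → (Fin κ → ZMod 2)) → (Fin κ → ZMod 2) and every choice of coefficients a : Fin p → ZMod 2, the probability that f(M_1, …, M_p) = Σ_i a_i • K_i + (1 + Σ_i a_i·b_i) • Δ is exactly 2^{−κ}; that is, forging a valid MAC on the flipped bit 1 + Σ_i a_i b_i of any ZMod 2 linear combination of authenticated bits succeeds with probability exactly 2^{−κ}. -/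
open scoped ENNReal

/-- With `Δ` and the keys `K₁, …, K_p` drawn independently and uniformly from
`Fin κ → ZMod 2` and MACs `Mᵢ = Kᵢ + bᵢ • Δ`, any adversary `f` seeing all MACs forges a
valid MAC `∑ᵢ aᵢ • Kᵢ + (1 + ∑ᵢ aᵢ bᵢ) • Δ` on the flipped bit `1 + ∑ᵢ aᵢ bᵢ` of the
linear combination `∑ᵢ aᵢ bᵢ` with probability exactly `2^(-κ)`. -/
theorem stmt_17 (κ p : ℕ) (b : Fin p → ZMod 2)
    (f : (Fin p → Fin κ → ZMod 2) → (Fin κ → ZMod 2)) (a : Fin p → ZMod 2) :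
    ∑ x : (Fin κ → ZMod 2) × (Fin p → Fin κ → ZMod 2),
      (PMF.uniformOfFintype ((Fin κ → ZMod 2) × (Fin p → Fin κ → ZMod 2))) x *
        (if f (fun i => x.2 i + b i • x.1)
            = (∑ i, a i • x.2 i) + (1 + ∑ i, a i * b i) • x.1 then 1 else 0)
    = (2 : ℝ≥0∞) ^ (-(κ : ℤ)) := by
  classical
  have hv : ∀ v : Fin κ → ZMod 2, v + v = 0 := fun v =>
    funext fun j => CharTwo.add_self_eq_zero (v j)
  have hb : ∀ (c : ZMod 2) (v : Fin κ → ZMod 2), c • v + c • v = 0 := by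
    intro c v
    rw [← add_smul, CharTwo.add_self_eq_zero, zero_smul]
  let e : ((Fin κ → ZMod 2) × (Fin p → Fin κ → ZMod 2)) ≃
      ((Fin κ → ZMod 2) × (Fin p → Fin κ → ZMod 2)) :=
    { toFun := fun x => (x.1, fun i => x.2 i + b i • x.1)
      invFun := fun x => (x.1, fun i => x.2 i + b i • x.1)
      left_inv := by
        intro x; refine Prod.ext rfl ?_
        funext i; simp [add_assoc, hb]
      right_inv := by
        intro x; refine Prod.ext rfl ?_
        funext i; simp [add_assoc, hb] }
  rw [← Equiv.sum_comp e]
  have hcond : ∀ x : (Fin κ → ZMod 2) × (Fin p → Fin κ → ZMod 2),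
      (f (fun i => (e x).2 i + b i • (e x).1)
          = (∑ i, a i • (e x).2 i) + (1 + ∑ i, a i * b i) • (e x).1)
        ↔ x.1 = f x.2 + ∑ i, a i • x.2 i := by
    intro x
    have harg : (fun i => (e x).2 i + b i • (e x).1) = x.2 := by
      funext i; simp [e, add_assoc, hb]
    have hrhs : (∑ i, a i • (e x).2 i) + (1 + ∑ i, a i * b i) • (e x).1
        = (∑ i, a i • x.2 i) + x.1 := by
      simp only [e, Equiv.coe_fn_mk, smul_add, Finset.sum_add_distrib, smul_smul, add_smul,
        one_smul]
      rw [← Finset.sum_smul]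
      abel_nf
      rw [two_smul, hb]
      abel
    rw [harg, hrhs]
    constructor
    · intro h
      rw [h, add_comm (∑ i, a i • x.2 i) x.1, add_assoc, hv, add_zero]
    · intro h
      rw [h, add_left_comm, hv, add_zero]
  have hsum : ∀ x : (Fin κ → ZMod 2) × (Fin p → Fin κ → ZMod 2),
      (PMF.uniformOfFintype ((Fin κ → ZMod 2) × (Fin p → Fin κ → ZMod 2))) (e x) *
        (if f (fun i => (e x).2 i + b i • (e x).1)
            = (∑ i, a i • (e x).2 i) + (1 + ∑ i, a i * b i) • (e x).1 then 1 else 0)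
      = (Fintype.card ((Fin κ → ZMod 2) × (Fin p → Fin κ → ZMod 2)) : ℝ≥0∞)⁻¹ *
          (if x.1 = f x.2 + ∑ i, a i • x.2 i then 1 else 0) := by
    intro x
    rw [PMF.uniformOfFintype_apply]
    congr 1
    simp [hcond x]
  rw [Finset.sum_congr rfl (fun x _ => hsum x)]
  rw [← Finset.mul_sum]
  rw [Fintype.sum_prod_type, Finset.sum_comm]
  simp only [Finset.sum_ite_eq' Finset.univ, Finset.mem_univ, if_true]
  simp only [Finset.sum_const, Finset.card_univ, nsmul_eq_mul, mul_one]
  have hc : (Fintype.card ((Fin κ → ZMod 2) × (Fin p → Fin κ → ZMod 2)) : ℝ≥0∞)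
      = (2 : ℝ≥0∞) ^ κ * (Fintype.card (Fin p → Fin κ → ZMod 2) : ℝ≥0∞) := by
    rw [Fintype.card_prod]
    push_cast
    congr 1
    simp
  rw [hc, ENNReal.mul_inv (by left; positivity) (by left; simp),
    mul_assoc,
    ENNReal.inv_mul_cancel (by simp [Fintype.card_pos.ne']) (by simp), mul_one,
    ← zpow_natCast (2 : ℝ≥0∞) κ, ← ENNReal.zpow_neg]
end

section
/- Let ψ ≥ 1, n, τ be natural numbers with 9ψ ≤ 2n and 4(n + ψ) ≤ 3τ. Let (S, c) with S ∈ Finset (Fin τ) and c ∈ {0,1} be drawn from an arbitrary probability distribution L satisfying E_{(S,c)←L}[c · 2^{|S|}] ≤ 2^{τ/4}, and independently let A be drawn uniformly at random from the ψ × τ matrices over ZMod 2. Then the probability that c = 1 and the columns of A with indices outside S do not span the whole space Fin ψ → ZMod 2 is at most 2^{2−ψ}. -/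
open scoped ENNReal

attribute [local instance] Classical.propDecidable

private lemma ker_card_two (ψ : ℕ) (v : Fin ψ → ZMod 2) (hv : v ≠ 0) :
    (Finset.univ.filter (fun w : Fin ψ → ZMod 2 => ∑ i, v i * w i = 0)).card * 2 ≤ 2 ^ ψ := by
  obtain ⟨i₀, hi₀⟩ : ∃ i, v i ≠ 0 := by
    by_contra h; push_neg at h; exact hv (funext h)
  set P := Finset.univ.filter (fun w : Fin ψ → ZMod 2 => ∑ i, v i * w i = 0) with hP
  set Q := Finset.univ.filter (fun w : Fin ψ → ZMod 2 => ¬ ∑ i, v i * w i = 0) with hQ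
  set e : Fin ψ → ZMod 2 := Pi.single i₀ 1 with he
  have hsum : ∀ w : Fin ψ → ZMod 2,
      ∑ i, v i * (w + e) i = (∑ i, v i * w i) + v i₀ := by
    intro w
    simp only [Pi.add_apply, mul_add, Finset.sum_add_distrib]
    congr 1
    simp [he, Pi.single_apply, mul_ite]
  have hle : P.card ≤ Q.card := by
    apply Finset.card_le_card_of_injOn (fun w => w + e)
    · intro w hw
      rw [hP, Finset.mem_coe, Finset.mem_filter] at hw
      rw [hQ, Finset.mem_coe, Finset.mem_filter]
      refine ⟨Finset.mem_univ _, ?_⟩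
      rw [hsum, hw.2, zero_add]
      exact hi₀
    · intro a _ b _ hab
      exact add_right_cancel hab
  have hdisj : Disjoint P Q := Finset.disjoint_filter_filter_not _ _ _
  have huniv : P ∪ Q = Finset.univ := Finset.filter_union_filter_not_eq _ _
  have hcard : P.card + Q.card = 2 ^ ψ := by
    rw [← Finset.card_union_of_disjoint hdisj, huniv, Finset.card_univ]
    simp [Fintype.card_fun]
  omega

private lemma badv_card (ψ τ : ℕ) (S : Finset (Fin τ)) (v : Fin ψ → ZMod 2) (hv : v ≠ 0) :
    (Finset.univ.filter (fun A : Matrix (Fin ψ) (Fin τ) (ZMod 2) =>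
        ∀ j ∉ S, ∑ i, v i * A i j = 0)).card * 2 ^ (τ - S.card) ≤ 2 ^ (ψ * τ) := by
  classical
  set K := Finset.univ.filter (fun w : Fin ψ → ZMod 2 => ∑ i, v i * w i = 0) with hK
  set t : Fin τ → Finset (Fin ψ → ZMod 2) := fun j => if j ∈ S then Finset.univ else K with ht
  have htS : ∀ j ∈ S, t j = Finset.univ := fun j hj => by simp only [ht, if_pos hj]
  have htc : ∀ j ∈ Sᶜ, t j = K := fun j hj => by
    simp only [ht, if_neg (Finset.mem_compl.mp hj)]
  have hbij : (Finset.univ.filter (fun A : Matrix (Fin ψ) (Fin τ) (ZMod 2) =>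
        ∀ j ∉ S, ∑ i, v i * A i j = 0)).card = (Fintype.piFinset t).card := by
    apply Finset.card_bij (fun A _ => fun j i => A i j)
    · intro A hA
      rw [Finset.mem_filter] at hA
      rw [Fintype.mem_piFinset]
      intro j
      by_cases hj : j ∈ S
      · rw [htS j hj]; exact Finset.mem_univ _
      · rw [htc j (Finset.mem_compl.mpr hj), hK, Finset.mem_filter]
        exact ⟨Finset.mem_univ _, hA.2 j hj⟩
    · intro A _ B _ hAB
      funext i j
      exact congrFun (congrFun hAB j) i
    · intro g hg
      refine ⟨fun i j => g j i, ?_, rfl⟩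
      apply Finset.mem_filter.mpr
      refine ⟨Finset.mem_univ _, ?_⟩
      intro j hj
      rw [Fintype.mem_piFinset] at hg
      have := hg j
      rw [htc j (Finset.mem_compl.mpr hj), hK, Finset.mem_filter] at this
      exact this.2
  have hs : S.card ≤ τ := by
    simpa using Finset.card_le_card (Finset.subset_univ S)
  have hpi : (Fintype.piFinset t).card = (2 ^ ψ) ^ S.card * K.card ^ (τ - S.card) := by
    rw [Fintype.card_piFinset, ← Finset.prod_mul_prod_compl S]
    have h1 : ∏ j ∈ S, (t j).card = (2 ^ ψ) ^ S.card := by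
      rw [Finset.prod_congr rfl (fun j hj => by rw [htS j hj] :
        ∀ j ∈ S, (t j).card = Finset.univ.card), Finset.prod_const, Finset.card_univ]
      simp [Fintype.card_fun]
    have h2 : ∏ j ∈ Sᶜ, (t j).card = K.card ^ (τ - S.card) := by
      rw [Finset.prod_congr rfl (fun j hj => by rw [htc j hj] :
        ∀ j ∈ Sᶜ, (t j).card = K.card), Finset.prod_const, Finset.card_compl]
      simp
    rw [h1, h2]
  rw [hbij, hpi]
  calc (2 ^ ψ) ^ S.card * K.card ^ (τ - S.card) * 2 ^ (τ - S.card)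
      = (2 ^ ψ) ^ S.card * (K.card * 2) ^ (τ - S.card) := by
        rw [mul_pow]; ring
    _ ≤ (2 ^ ψ) ^ S.card * (2 ^ ψ) ^ (τ - S.card) :=
        Nat.mul_le_mul_left _ (Nat.pow_le_pow_left (ker_card_two ψ v hv) _)
    _ = 2 ^ (ψ * τ) := by
        rw [← pow_add, Nat.add_sub_cancel' hs, ← pow_mul]

private lemma bad_card (ψ τ : ℕ) (S : Finset (Fin τ)) :
    (Finset.univ.filter (fun A : Matrix (Fin ψ) (Fin τ) (ZMod 2) =>
        Submodule.span (ZMod 2) ((fun j => fun i => A i j) '' {j | j ∉ S}) ≠ ⊤)).card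
      * 2 ^ τ ≤ 2 ^ (ψ + S.card + ψ * τ) := by
  classical
  set badv : (Fin ψ → ZMod 2) → Finset (Matrix (Fin ψ) (Fin τ) (ZMod 2)) := fun v =>
    Finset.univ.filter (fun A => ∀ j ∉ S, ∑ i, v i * A i j = 0) with hbadv
  have hsub : (Finset.univ.filter (fun A : Matrix (Fin ψ) (Fin τ) (ZMod 2) =>
      Submodule.span (ZMod 2) ((fun j => fun i => A i j) '' {j | j ∉ S}) ≠ ⊤))
      ⊆ (Finset.univ.filter (fun v : Fin ψ → ZMod 2 => v ≠ 0)).biUnion badv := by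
    intro A hA
    rw [Finset.mem_filter] at hA
    have hlt : Submodule.span (ZMod 2) ((fun j => fun i => A i j) '' {j | j ∉ S}) < ⊤ :=
      lt_top_iff_ne_top.mpr hA.2
    obtain ⟨f, hf0, hfker⟩ := Submodule.exists_le_ker_of_lt_top _ hlt
    obtain ⟨v, hv⟩ : ∃ v : Fin ψ → ZMod 2, v = fun i => f (fun j => if i = j then 1 else 0) :=
      ⟨_, rfl⟩
    have hfx : ∀ x : Fin ψ → ZMod 2, f x = ∑ i, v i * x i := by
      intro x
      rw [LinearMap.pi_apply_eq_sum_univ f x]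
      exact Finset.sum_congr rfl fun i _ => by rw [smul_eq_mul, mul_comm, hv]
    have hvne : v ≠ 0 := by
      intro hv0
      apply hf0
      apply LinearMap.ext
      intro x
      rw [hfx x, hv0]
      simp
    rw [Finset.mem_biUnion]
    refine ⟨v, by simp [hvne], ?_⟩
    rw [hbadv, Finset.mem_filter]
    refine ⟨Finset.mem_univ _, fun j hj => ?_⟩
    have hmem : (fun i => A i j) ∈ Submodule.span (ZMod 2)
        ((fun j => fun i => A i j) '' {j | j ∉ S}) :=
      Submodule.subset_span ⟨j, hj, rfl⟩
    have := hfker hmem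
    rw [LinearMap.mem_ker, hfx] at this
    exact this
  have hs : S.card ≤ τ := by
    simpa using Finset.card_le_card (Finset.subset_univ S)
  have h1 : (Finset.univ.filter (fun A : Matrix (Fin ψ) (Fin τ) (ZMod 2) =>
      Submodule.span (ZMod 2) ((fun j => fun i => A i j) '' {j | j ∉ S}) ≠ ⊤)).card
      * 2 ^ (τ - S.card) ≤ 2 ^ ψ * 2 ^ (ψ * τ) := by
    calc _ ≤ ((Finset.univ.filter (fun v : Fin ψ → ZMod 2 => v ≠ 0)).biUnion badv).card
            * 2 ^ (τ - S.card) := Nat.mul_le_mul_right _ (Finset.card_le_card hsub)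
      _ ≤ (∑ v ∈ Finset.univ.filter (fun v : Fin ψ → ZMod 2 => v ≠ 0), (badv v).card)
            * 2 ^ (τ - S.card) := Nat.mul_le_mul_right _ (Finset.card_biUnion_le)
      _ = ∑ v ∈ Finset.univ.filter (fun v : Fin ψ → ZMod 2 => v ≠ 0),
            ((badv v).card * 2 ^ (τ - S.card)) := by rw [Finset.sum_mul]
      _ ≤ ∑ v ∈ Finset.univ.filter (fun v : Fin ψ → ZMod 2 => v ≠ 0), 2 ^ (ψ * τ) := by
            apply Finset.sum_le_sum
            intro v hv
            exact badv_card ψ τ S v (Finset.mem_filter.mp hv).2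
      _ ≤ 2 ^ ψ * 2 ^ (ψ * τ) := by
            rw [Finset.sum_const, smul_eq_mul]
            apply Nat.mul_le_mul_right
            calc (Finset.univ.filter (fun v : Fin ψ → ZMod 2 => v ≠ 0)).card
                ≤ Finset.univ.card := Finset.card_le_card (Finset.filter_subset _ _)
              _ = 2 ^ ψ := by rw [Finset.card_univ]; simp [Fintype.card_fun]
  calc _ = (Finset.univ.filter (fun A : Matrix (Fin ψ) (Fin τ) (ZMod 2) =>
        Submodule.span (ZMod 2) ((fun j => fun i => A i j) '' {j | j ∉ S}) ≠ ⊤)).card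
        * 2 ^ (τ - S.card) * 2 ^ S.card := by
        rw [mul_assoc, ← pow_add, Nat.sub_add_cancel hs]
    _ ≤ 2 ^ ψ * 2 ^ (ψ * τ) * 2 ^ S.card := Nat.mul_le_mul_right _ h1
    _ = 2 ^ (ψ + S.card + ψ * τ) := by rw [← pow_add, ← pow_add]; ring_nf

private lemma rpow_shift {x : ℝ≥0∞} {a b : ℝ} (h : x * 2 ^ a ≤ (2 : ℝ≥0∞) ^ b) (c : ℝ) :
    x * 2 ^ c ≤ (2 : ℝ≥0∞) ^ (b - a + c) := by
  have h2 : (2 : ℝ≥0∞) ≠ 0 := two_ne_zero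
  have ht : (2 : ℝ≥0∞) ≠ ⊤ := ENNReal.ofNat_ne_top
  calc x * 2 ^ c = x * 2 ^ a * 2 ^ (c - a) := by
        rw [mul_assoc, ← ENNReal.rpow_add _ _ h2 ht, add_sub_cancel]
    _ ≤ 2 ^ b * 2 ^ (c - a) := mul_le_mul_left h _
    _ = 2 ^ (b - a + c) := by rw [← ENNReal.rpow_add _ _ h2 ht]; ring_nf


/-- Key bound for the WaBit-to-aBit amplification: if `9ψ ≤ 2n`, `4(n+ψ) ≤ 3τ`, the leakage
distribution `L` on pairs `(S, c)` satisfies `E[(c : ℝ≥0∞) · 2^|S|] ≤ 2^(τ/4)`, and `A` is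
a uniformly random `ψ × τ` matrix over `ZMod 2` independent of `(S, c)`, then the
probability that `c = 1` and the columns of `A` outside `S` do not span `Fin ψ → ZMod 2`
is at most `2^(2-ψ)`. -/
theorem stmt_18 (ψ n τ : ℕ) (hψ : 1 ≤ ψ) (hn : 9 * ψ ≤ 2 * n) (hτ : 4 * (n + ψ) ≤ 3 * τ)
    (L : PMF (Finset (Fin τ) × Bool))
    (hL : ∑ sc : Finset (Fin τ) × Bool,
        L sc * (if sc.2 = true then 1 else 0) * 2 ^ sc.1.card
        ≤ (2 : ℝ≥0∞) ^ ((τ : ℝ) / 4)) :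
    ∑ A : Matrix (Fin ψ) (Fin τ) (ZMod 2), ∑ sc : Finset (Fin τ) × Bool,
      (PMF.uniformOfFintype (Matrix (Fin ψ) (Fin τ) (ZMod 2))) A * L sc *
        (if sc.2 = true ∧
            Submodule.span (ZMod 2) ((fun j => fun i => A i j) '' {j | j ∉ sc.1}) ≠ ⊤
          then 1 else 0)
    ≤ (2 : ℝ≥0∞) ^ ((2 : ℤ) - (ψ : ℤ)) := by
  classical
  have h2 : (2 : ℝ≥0∞) ≠ 0 := two_ne_zero
  have htop : (2 : ℝ≥0∞) ≠ ⊤ := ENNReal.ofNat_ne_top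
  have hcardM : Fintype.card (Matrix (Fin ψ) (Fin τ) (ZMod 2)) = 2 ^ (ψ * τ) := by
    show Fintype.card (Fin ψ → Fin τ → ZMod 2) = 2 ^ (ψ * τ)
    simp only [Fintype.card_fun, Fintype.card_fin, ZMod.card]
    rw [← pow_mul, Nat.mul_comm τ ψ]
  set bad : Finset (Fin τ) → Finset (Matrix (Fin ψ) (Fin τ) (ZMod 2)) := fun S =>
    Finset.univ.filter (fun A => Submodule.span (ZMod 2)
      ((fun j => fun i => A i j) '' {j | j ∉ S}) ≠ ⊤) with hbad
  set C : ℝ≥0∞ := (2 : ℝ≥0∞) ^ ((ψ : ℝ) - (τ : ℝ)) with hC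
  have key : ∀ S : Finset (Fin τ),
      ((bad S).card : ℝ≥0∞) * ((Fintype.card (Matrix (Fin ψ) (Fin τ) (ZMod 2)) : ℝ≥0∞))⁻¹
        ≤ 2 ^ S.card * C := by
    intro S
    have hnat := bad_card ψ τ S
    have hcast : ((bad S).card : ℝ≥0∞) * (2 : ℝ≥0∞) ^ ((τ : ℕ) : ℝ)
        ≤ (2 : ℝ≥0∞) ^ (((ψ + S.card + ψ * τ : ℕ)) : ℝ) := by
      rw [ENNReal.rpow_natCast, ENNReal.rpow_natCast]
      calc ((bad S).card : ℝ≥0∞) * (2 : ℝ≥0∞) ^ (τ : ℕ)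
          = (((bad S).card * 2 ^ τ : ℕ) : ℝ≥0∞) := by push_cast; ring
        _ ≤ ((2 ^ (ψ + S.card + ψ * τ) : ℕ) : ℝ≥0∞) := by exact_mod_cast Nat.cast_le.mpr hnat
        _ = (2 : ℝ≥0∞) ^ (ψ + S.card + ψ * τ) := by push_cast; ring
    have hshift := rpow_shift hcast (-((ψ * τ : ℕ) : ℝ))
    have hinv : ((Fintype.card (Matrix (Fin ψ) (Fin τ) (ZMod 2)) : ℝ≥0∞))⁻¹
        = (2 : ℝ≥0∞) ^ (-((ψ * τ : ℕ) : ℝ)) := by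
      rw [hcardM, ENNReal.rpow_neg, ENNReal.rpow_natCast]
      push_cast
      ring_nf
    rw [hinv]
    refine le_trans hshift (le_of_eq ?_)
    rw [hC, ← ENNReal.rpow_natCast (2 : ℝ≥0∞) S.card, ← ENNReal.rpow_add _ _ h2 htop]
    congr 1
    push_cast
    ring
  have step1 : (∑ A : Matrix (Fin ψ) (Fin τ) (ZMod 2), ∑ sc : Finset (Fin τ) × Bool,
      (PMF.uniformOfFintype (Matrix (Fin ψ) (Fin τ) (ZMod 2))) A * L sc *
        (if sc.2 = true ∧
            Submodule.span (ZMod 2) ((fun j => fun i => A i j) '' {j | j ∉ sc.1}) ≠ ⊤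
          then 1 else 0))
      = ∑ sc : Finset (Fin τ) × Bool, L sc *
          (((Fintype.card (Matrix (Fin ψ) (Fin τ) (ZMod 2)) : ℝ≥0∞))⁻¹ *
            (if sc.2 = true then ((bad sc.1).card : ℝ≥0∞) else 0)) := by
    rw [Finset.sum_comm]
    apply Finset.sum_congr rfl
    intro sc _
    simp only [PMF.uniformOfFintype_apply]
    by_cases hc : sc.2 = true
    · simp only [hc, true_and, if_true]
      rw [← Finset.mul_sum]
      rw [Finset.sum_boole]
      rw [hbad]
      ring
    · simp [hc]
  rw [step1]
  calc ∑ sc : Finset (Fin τ) × Bool, L sc *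
          (((Fintype.card (Matrix (Fin ψ) (Fin τ) (ZMod 2)) : ℝ≥0∞))⁻¹ *
            (if sc.2 = true then ((bad sc.1).card : ℝ≥0∞) else 0))
      ≤ ∑ sc : Finset (Fin τ) × Bool,
          (L sc * (if sc.2 = true then 1 else 0) * 2 ^ sc.1.card) * C := by
        apply Finset.sum_le_sum
        intro sc _
        by_cases hc : sc.2 = true
        · simp only [hc, if_true, mul_one]
          calc L sc * ((↑(Fintype.card (Matrix (Fin ψ) (Fin τ) (ZMod 2))))⁻¹ *
                ((bad sc.1).card : ℝ≥0∞))
              ≤ L sc * (2 ^ sc.1.card * C) := by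
                apply mul_le_mul_right
                rw [mul_comm]
                exact key sc.1
            _ = L sc * 2 ^ sc.1.card * C := by ring
        · simp [hc]
    _ = (∑ sc : Finset (Fin τ) × Bool,
          L sc * (if sc.2 = true then 1 else 0) * 2 ^ sc.1.card) * C := by
        rw [Finset.sum_mul]
    _ ≤ (2 : ℝ≥0∞) ^ ((τ : ℝ) / 4) * C := mul_le_mul_left hL _
    _ = (2 : ℝ≥0∞) ^ ((τ : ℝ) / 4 + ((ψ : ℝ) - (τ : ℝ))) := by
        rw [hC, ← ENNReal.rpow_add _ _ h2 htop]
    _ ≤ (2 : ℝ≥0∞) ^ ((((2 : ℤ) - (ψ : ℤ)) : ℤ) : ℝ) := by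
        apply ENNReal.rpow_le_rpow_of_exponent_le one_le_two
        have hnat : 8 * ψ ≤ 3 * τ := by omega
        have : (8 * ψ : ℝ) ≤ 3 * τ := by exact_mod_cast hnat
        push_cast
        linarith
    _ = (2 : ℝ≥0∞) ^ ((2 : ℤ) - (ψ : ℤ)) := ENNReal.rpow_intCast 2 _
end
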